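/- arXiv:0704.1859 — 3 statements merged into one kernel-verified Lean document; each statement's English description precedes it below -/
import Mathlib

section
/- Let f_n ≥ 0 for n ∈ ℕ and let f = Σ_{n=0}^∞ f_n χ_n be the corresponding radial function on the free group F. If A(f) = Σ_{n,m=0}^∞ f_n f_m q^{(n+m)/2} (1 + min(n,m)) < ∞, then for every finite subset E ⊆ F one has Σ_{x∈F} ((f∗χ_E)(x))² ≤ 4 · A(f) · |E|. (Equivalently, the convolution operator λ(f)g = f∗g is of weak type (2,2), with ‖λ(f)‖²_{2→(2,∞)} ≤ 4 A(f).) -/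
open scoped ENNReal

noncomputable section

/-- Word length on the free group: the number of letters of the reduced word. -/
def wlen {α : Type*} [DecidableEq α] (x : FreeGroup α) : ℕ := x.toWord.length

/-- Convolution of `ℝ≥0∞`-valued functions on a group:
`(f ∗ g)(x) = Σ_y f(y) g(y⁻¹ x)`. -/
def conv {G : Type*} [Group G] (f g : G → ℝ≥0∞) (x : G) : ℝ≥0∞ :=
  ∑' y, f y * g (y⁻¹ * x)

/-- Indicator function (ℝ≥0∞-valued) of a finite set. -/
def finInd {G : Type*} [DecidableEq G] (E : Finset G) (x : G) : ℝ≥0∞ :=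
  if x ∈ E then 1 else 0

namespace RWT

open FreeGroup List

variable {α : Type*} [DecidableEq α]

/-- inverse of a letter -/
def invL (a : α × Bool) : α × Bool := (a.1, !a.2)

@[simp] lemma invL_invL (a : α × Bool) : invL (invL a) = a := by
  cases a; simp [invL]

/-- no-cancellation relation between consecutive letters -/
def Rl (p n : α × Bool) : Prop := ¬(p.1 = n.1 ∧ p.2 = !n.2)

lemma Rl_iff {p n : α × Bool} : Rl p n ↔ n ≠ invL p := by
  obtain ⟨x, b⟩ := p; obtain ⟨y, c⟩ := n
  cases b <;> cases c <;>
    simp [Rl, invL, Prod.ext_iff, eq_comm] <;> tauto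

/-- the reducedness predicate as a chain condition -/
def IsRed (l : List (α × Bool)) : Prop := List.Chain' Rl l

lemma isRed_of_reduce_eq {l : List (α × Bool)} (h : reduce l = l) : IsRed l := by
  induction l with
  | nil => exact List.isChain_nil
  | cons a t ih =>
    rcases t with _ | ⟨b, t'⟩
    · exact List.isChain_singleton a
    · have hred : reduce (b :: t') = b :: t' := by
        have hc := reduce.cons (L := b :: t') a
        rw [h] at hc
        rcases hr : reduce (b :: t') with _ | ⟨hd, tl⟩
        · rw [hr] at hc; simp at hc
        · rw [hr] at hc
          simp only at hc
          split_ifs at hc with hcond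
          · exfalso
            have h1 : (reduce (b :: t')).length ≤ (b :: t').length :=
              (reduce.red (L := b :: t')).length_le
            rw [hr] at h1
            have h2 := congrArg List.length hc
            simp at h2 h1
            omega
          · injection hc with h1 h2
            exact h2.symm
      have hRab : Rl a b := by
        rw [Rl_iff]
        intro hb
        exact reduce.not (L₂ := []) (L₃ := t') (x := a.1) (b := a.2)
          (by rw [h, hb]; rfl)
      exact List.isChain_cons_cons.mpr ⟨hRab, ih hred⟩

lemma reduce_eq_of_isRed {l : List (α × Bool)} (h : IsRed l) : reduce l = l := by
  induction l with
  | nil => rfl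
  | cons a t ih =>
    rcases t with _ | ⟨b, t'⟩
    · rfl
    · have h' := List.isChain_cons_cons.mp h
      have hred : reduce (b :: t') = b :: t' := ih h'.2
      have hc := reduce.cons (L := b :: t') a
      rw [hred] at hc
      simp only at hc
      rw [hc]
      split_ifs with hcond
      · exact absurd hcond h'.1
      · rfl

lemma isRed_toWord (x : FreeGroup α) : IsRed x.toWord :=
  isRed_of_reduce_eq (FreeGroup.reduce_toWord x)

lemma invRev_cons (a : α × Bool) (l : List (α × Bool)) :
    invRev (a :: l) = invRev l ++ [invL a] := by
  simp [invRev, invL]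

/-- main cancellation lemma at the level of words -/
theorem wcl : ∀ (L1 L2 : List (α × Bool)), IsRed L1 → IsRed L2 →
    ∃ c, c ≤ L1.length ∧ c ≤ L2.length ∧
      L1.drop (L1.length - c) = invRev (L2.take c) ∧
      reduce (L1 ++ L2) = L1.take (L1.length - c) ++ L2.drop c := by
  intro L1
  induction L1 using List.reverseRecOn with
  | nil =>
    intro L2 _ h2
    exact ⟨0, by simp, by simp, by simp [invRev], by simpa using reduce_eq_of_isRed h2⟩
  | append_singleton M p ih =>
    intro L2 h1 h2
    rcases L2 with _ | ⟨n, T⟩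
    · refine ⟨0, by simp, by simp, by simp [invRev], ?_⟩
      simp only [List.append_nil, Nat.sub_zero, List.take_length, List.drop_zero]
      exact reduce_eq_of_isRed h1
    · by_cases hcan : Rl p n
      · refine ⟨0, by simp, by simp, by simp [invRev], ?_⟩
        simp only [Nat.sub_zero, List.take_length, List.drop_zero]
        apply reduce_eq_of_isRed
        apply List.isChain_append.mpr
        refine ⟨h1, h2, ?_⟩
        intro x hx y hy
        rw [List.getLast?_concat] at hx
        simp only [List.head?_cons, Option.mem_def, Option.some.injEq] at hx hy
        subst hx; subst hy
        exact hcan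
      · have hn : n = invL p := by
          rw [Rl_iff] at hcan; push_neg at hcan; exact hcan
        have hM : IsRed M := List.IsChain.left_of_append h1
        have hT : IsRed T := List.IsChain.tail h2
        obtain ⟨c, hc1, hc2, hdrop, hred⟩ := ih T hM hT
        have hlen : (M ++ [p]).length = M.length + 1 := by simp
        refine ⟨c + 1, by rw [hlen]; omega, by simp only [List.length_cons]; omega, ?_, ?_⟩
        · rw [hlen]
          have hsub : M.length + 1 - (c + 1) = M.length - c := by omega
          rw [hsub]
          rw [List.drop_append_of_le_length (by omega)]
          rw [List.take_succ_cons, invRev_cons, hdrop]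
          congr 1
          rw [hn, invL_invL]
        · have hstep : Red.Step ((M ++ [p]) ++ n :: T) (M ++ T) := by
            have he : (M ++ [p]) ++ n :: T = M ++ (p.1, p.2) :: (p.1, !p.2) :: T := by
              rw [hn]; simp [invL]
            rw [he]
            exact Red.Step.not
          rw [reduce.Step.eq hstep, hred, hlen]
          have hsub : M.length + 1 - (c + 1) = M.length - c := by omega
          rw [hsub]
          rw [List.take_append_of_le_length (by omega)]
          rfl


lemma IsRed.take {l : List (α × Bool)} (h : IsRed l) (n : ℕ) : IsRed (l.take n) :=
  List.IsChain.take h n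

lemma wlen_mk {l : List (α × Bool)} (h : IsRed l) : wlen (FreeGroup.mk l) = l.length := by
  rw [wlen, toWord_mk, reduce_eq_of_isRed h]

lemma wlen_inv (x : FreeGroup α) : wlen x⁻¹ = wlen x := by
  rw [wlen, toWord_inv, invRev_length]; rfl

lemma isRed_invRev {l : List (α × Bool)} (h : IsRed l) : IsRed (invRev l) := by
  have hrep : invRev l = (l.map invL).reverse := rfl
  unfold IsRed at h ⊢
  change List.IsChain Rl l at h
  change List.IsChain Rl (invRev l)
  rw [hrep, List.isChain_reverse, List.isChain_map]
  refine List.IsChain.imp ?_ h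
  intro a b hab
  rw [Rl_iff] at hab
  show Rl (invL b) (invL a)
  rw [Rl_iff, invL_invL]
  exact fun he => hab he.symm

/-- The master cancellation data for a product `u * t`. -/
theorem mc (u t : FreeGroup α) : ∃ c, c ≤ wlen u ∧ c ≤ wlen t ∧
    u.toWord.drop (wlen u - c) = invRev (t.toWord.take c) ∧
    (u * t).toWord = u.toWord.take (wlen u - c) ++ t.toWord.drop c ∧
    wlen u + wlen t = wlen (u * t) + 2 * c ∧
    wlen (u * FreeGroup.mk (t.toWord.take c)) + c = wlen u := by
  obtain ⟨c, hc1, hc2, hdrop, hred⟩ := wcl u.toWord t.toWord (isRed_toWord u) (isRed_toWord t)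
  have hwu : u.toWord.length = wlen u := rfl
  have hwt : t.toWord.length = wlen t := rfl
  rw [hwu] at hc1 hdrop hred
  rw [hwt] at hc2
  have hmul : (u * t).toWord = u.toWord.take (wlen u - c) ++ t.toWord.drop c := by
    conv_lhs => rw [← mk_toWord (x := u), ← mk_toWord (x := t)]
    rw [mul_mk, toWord_mk, hred]
  refine ⟨c, hc1, hc2, hdrop, hmul, ?_, ?_⟩
  · have h1 : wlen (u * t) = (wlen u - c) + (wlen t - c) := by
      rw [wlen, hmul, List.length_append, List.length_take, List.length_drop]
      rw [min_eq_left (by omega : wlen u - c ≤ u.toWord.length)]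
      rw [hwt]
    omega
  · have hu : u.toWord = u.toWord.take (wlen u - c) ++ invRev (t.toWord.take c) := by
      rw [← hdrop, List.take_append_drop]
    have hkey : u * FreeGroup.mk (t.toWord.take c)
        = FreeGroup.mk (u.toWord.take (wlen u - c)) := by
      conv_lhs => rw [← mk_toWord (x := u)]
      rw [mul_mk]
      conv_lhs => rw [hu]
      rw [List.append_assoc, ← mul_mk, ← mul_mk, ← inv_mk, inv_mul_cancel, mul_one]
    rw [hkey, wlen_mk ((isRed_toWord u).take _), List.length_take]
    rw [min_eq_left (by omega : wlen u - c ≤ u.toWord.length)]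
    omega


/-! ### indicator -/

noncomputable def uind (p : Prop) : ℝ≥0∞ := by classical exact if p then 1 else 0

lemma uind_of_true {p : Prop} (h : p) : uind p = 1 := by simp [uind, h]
lemma uind_of_false {p : Prop} (h : ¬p) : uind p = 0 := by simp [uind, h]
lemma uind_mono {p q : Prop} (h : p → q) : uind p ≤ uind q := by
  classical
  by_cases hp : p
  · rw [uind_of_true hp, uind_of_true (h hp)]
  · rw [uind_of_false hp]; exact zero_le

lemma uind_eq_indicator {G : Type*} (P : G → Prop) (x : G) :
    uind (P x) = Set.indicator {y | P y} (fun _ => (1 : ℝ≥0∞)) x := by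
  classical
  by_cases h : P x
  · rw [uind_of_true h, Set.indicator_of_mem (show x ∈ {y | P y} from h)]
  · rw [uind_of_false h, Set.indicator_of_notMem (show x ∉ {y | P y} from h)]

/-- counting via an injection into a finite type -/
lemma tsum_uind_le_card {G : Type*} (P : G → Prop) {β : Type*} [Fintype β]
    (F : {x : G // P x} → β) (hinj : Function.Injective F) :
    ∑' x : G, uind (P x) ≤ (Fintype.card β : ℝ≥0∞) := by
  have h1 : ∑' x : G, uind (P x) = ∑' x : ({y | P y} : Set G), (1 : ℝ≥0∞) := by
    rw [tsum_subtype ({y | P y} : Set G) (fun _ => (1 : ℝ≥0∞))]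
    exact tsum_congr fun x => uind_eq_indicator P x
  rw [h1]
  calc ∑' x : ({y | P y} : Set G), (1 : ℝ≥0∞)
      = ∑' x : ({y | P y} : Set G), (fun _ : β => (1:ℝ≥0∞)) (F x) := rfl
    _ ≤ ∑' b : β, (1 : ℝ≥0∞) := ENNReal.tsum_comp_le_tsum_of_injective hinj _
    _ = (Fintype.card β : ℝ≥0∞) := by
        rw [tsum_fintype]
        simp

/-! ### encoding of reduced words -/

variable (r : ℕ)

def eqL (hr : 2 ≤ r) : (Fin r × Bool) ≃ Fin (2 * r - 1 + 1) :=
  Fintype.equivFinOfCardEq (by simp; omega)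

noncomputable def encL (hr : 2 ≤ r) (f a : Fin r × Bool) : Fin (2 * r - 1) :=
  (finSuccEquiv' (eqL r hr f) (eqL r hr a)).getD ⟨0, by omega⟩

lemma encL_inj (hr : 2 ≤ r) {f a a' : Fin r × Bool} (ha : a ≠ f) (ha' : a' ≠ f)
    (h : encL r hr f a = encL r hr f a') : a = a' := by
  have key : ∀ b : Fin r × Bool, b ≠ f →
      ∃ v, finSuccEquiv' (eqL r hr f) (eqL r hr b) = some v := by
    intro b hb
    rcases ho : finSuccEquiv' (eqL r hr f) (eqL r hr b) with _ | v
    · exfalso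
      apply hb
      have h2 := ho.trans (finSuccEquiv'_at (eqL r hr f)).symm
      exact (eqL r hr).injective ((finSuccEquiv' (eqL r hr f)).injective h2)
    · exact ⟨v, rfl⟩
  obtain ⟨v, hv⟩ := key a ha
  obtain ⟨v', hv'⟩ := key a' ha'
  unfold encL at h
  rw [hv, hv'] at h
  simp only [Option.getD_some] at h
  subst h
  exact (eqL r hr).injective ((finSuccEquiv' (eqL r hr f)).injective (hv.trans hv'.symm))

noncomputable def encList (hr : 2 ≤ r) :
    (Fin r × Bool) → List (Fin r × Bool) → List (Fin (2 * r - 1))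
  | _, [] => []
  | f, a :: rest => encL r hr f a :: encList hr (invL a) rest

@[simp] lemma encList_nil (hr : 2 ≤ r) (f : Fin r × Bool) : encList r hr f [] = [] := rfl

@[simp] lemma encList_cons (hr : 2 ≤ r) (f a : Fin r × Bool) (rest : List (Fin r × Bool)) :
    encList r hr f (a :: rest) = encL r hr f a :: encList r hr (invL a) rest := rfl

lemma encList_length (hr : 2 ≤ r) :
    ∀ (f : Fin r × Bool) (l : List (Fin r × Bool)), (encList r hr f l).length = l.length := by
  intro f l
  induction l generalizing f with
  | nil => rfl
  | cons a rest ih => simp [ih]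

lemma encList_inj (hr : 2 ≤ r) :
    ∀ (l l' : List (Fin r × Bool)) (f : Fin r × Bool), IsRed l → IsRed l' →
      l.head? ≠ some f → l'.head? ≠ some f →
      encList r hr f l = encList r hr f l' → l = l' := by
  intro l
  induction l with
  | nil =>
    intro l' f _ _ _ _ h
    rcases l' with _ | ⟨a', t'⟩
    · rfl
    · simp at h
  | cons a t ih =>
    intro l' f hred hred' hh hh' h
    rcases l' with _ | ⟨a', t'⟩
    · simp at h
    · simp only [encList_cons, List.cons.injEq] at h
      have ha : a ≠ f := by
        intro he; apply hh; rw [he]; rfl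
      have ha' : a' ≠ f := by
        intro he; apply hh'; rw [he]; rfl
      have haa : a = a' := encL_inj r hr ha ha' h.1
      subst haa
      have ht : t = t' := by
        apply ih t' (invL a) (List.IsChain.tail hred) (List.IsChain.tail hred') ?_ ?_ h.2
        · rcases t with _ | ⟨b, tt⟩
          · simp
          · have := (List.isChain_cons_cons.mp hred).1
            rw [Rl_iff] at this
            simpa using this
        · rcases t' with _ | ⟨b', tt'⟩
          · simp
          · have := (List.isChain_cons_cons.mp hred').1
            rw [Rl_iff] at this
            simpa using this
      rw [ht]


lemma head?_invRev (l : List (α × Bool)) :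
    (invRev l).head? = l.getLast?.map invL := by
  have hrep : invRev l = l.reverse.map invL := by
    show (l.map (fun g : α × Bool => (g.1, !g.2))).reverse = _
    rw [← List.map_reverse]
    rfl
  rw [hrep, List.head?_map, List.head?_reverse]

/-- cardinality bound for spheres -/
def Wn (r j : ℕ) : ℕ := if j = 0 then 1 else (2*r) * (2*r-1)^(j-1)

lemma count_sphere (hr : 2 ≤ r) (j : ℕ) :
    ∑' x : FreeGroup (Fin r), uind (wlen x = j) ≤ (Wn r j : ℝ≥0∞) := by
  cases j with
  | zero =>
    have hle := tsum_uind_le_card (fun x : FreeGroup (Fin r) => wlen x = 0)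
      (β := PUnit.{1}) (fun _ => PUnit.unit) ?_
    · simpa [Wn] using hle
    · rintro ⟨x, hx⟩ ⟨y, hy⟩ -
      apply Subtype.ext
      have hx1 : x = 1 := by rwa [wlen, List.length_eq_zero_iff, toWord_eq_nil_iff] at hx
      have hy1 : y = 1 := by rwa [wlen, List.length_eq_zero_iff, toWord_eq_nil_iff] at hy
      show x = y
      rw [hx1, hy1]
  | succ j' =>
    have hne : ∀ z : {x : FreeGroup (Fin r) // wlen x = j' + 1}, z.1.toWord ≠ [] := by
      intro z
      apply List.ne_nil_of_length_pos
      have : z.1.toWord.length = j' + 1 := z.2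
      omega
    have hle := tsum_uind_le_card (fun x : FreeGroup (Fin r) => wlen x = j' + 1)
      (β := (Fin r × Bool) × List.Vector (Fin (2*r-1)) j')
      (fun z => (z.1.toWord.head (hne z),
        ⟨encList r hr (invL (z.1.toWord.head (hne z))) z.1.toWord.tail, by
          rw [encList_length, List.length_tail]
          have : z.1.toWord.length = j' + 1 := z.2
          omega⟩)) ?_
    · refine le_trans hle ?_
      rw [Fintype.card_prod, card_vector, Fintype.card_prod, Fintype.card_fin,
        Fintype.card_bool, Fintype.card_fin, Wn]
      simp only [Nat.succ_ne_zero, if_false, Nat.add_sub_cancel]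
      rw [Nat.cast_le]
      apply le_of_eq
      ring
    · rintro ⟨x, hx⟩ ⟨y, hy⟩ h
      simp only [Prod.mk.injEq, Subtype.mk.injEq] at h
      obtain ⟨hhead, htail⟩ := Prod.mk.inj h
      have hcx : x.toWord.head _ :: x.toWord.tail = x.toWord := List.cons_head_tail (hne ⟨x, hx⟩)
      have hcy : y.toWord.head _ :: y.toWord.tail = y.toWord := List.cons_head_tail (hne ⟨y, hy⟩)
      have hchx : IsRed (x.toWord.head (hne ⟨x,hx⟩) :: x.toWord.tail) := by
        rw [hcx]; exact isRed_toWord x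
      have hchy : IsRed (y.toWord.head (hne ⟨y,hy⟩) :: y.toWord.tail) := by
        rw [hcy]; exact isRed_toWord y
      have hhx : x.toWord.tail.head? ≠ some (invL (x.toWord.head (hne ⟨x,hx⟩))) := by
        rcases ht : x.toWord.tail with _ | ⟨b, tt⟩
        · simp
        · have h2 := hchx
          rw [ht] at h2
          have hrl := (List.isChain_cons_cons.mp h2).1
          rw [Rl_iff] at hrl
          simpa using hrl
      have hhy : y.toWord.tail.head? ≠ some (invL (y.toWord.head (hne ⟨y,hy⟩))) := by
        rcases ht : y.toWord.tail with _ | ⟨b, tt⟩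
        · simp
        · have h2 := hchy
          rw [ht] at h2
          have hrl := (List.isChain_cons_cons.mp h2).1
          rw [Rl_iff] at hrl
          simpa using hrl
      have henc := congrArg Subtype.val htail
      simp only at henc
      rw [← hhead] at henc
      rw [← hhead] at hhy
      have htx := List.IsChain.tail hchx
      have hty := List.IsChain.tail hchy
      have htl : x.toWord.tail = y.toWord.tail :=
        encList_inj r hr _ _ _ htx hty hhx hhy henc
      apply Subtype.ext
      apply toWord_injective
      rw [← hcx, ← hcy, hhead, htl]

lemma count_s (hr : 2 ≤ r) (w : FreeGroup (Fin r)) (k s : ℕ) (hs : 2 * s ≤ k) :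
    ∑' z : FreeGroup (Fin r),
        uind (wlen (z * w⁻¹) = k ∧ wlen z + k = wlen w + 2 * s)
      ≤ (((2*r-1)^s : ℕ) : ℝ≥0∞) := by
  classical
  set lw : List (Fin r × Bool) := (w⁻¹).toWord with hlw
  have hlwlen : lw.length = wlen w := wlen_inv w
  set cdef : ℕ := wlen w + s - k with hcdef
  set β : Fin r × Bool := (lw[cdef]?).getD (⟨0, by omega⟩, true) with hβ
  have zfact : ∀ z : FreeGroup (Fin r),
      (wlen (z * w⁻¹) = k ∧ wlen z + k = wlen w + 2 * s) →
      (z.toWord.take s).length = s ∧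
      z.toWord = z.toWord.take s ++ invRev (lw.take cdef) ∧
      IsRed (invRev (z.toWord.take s)) ∧
      (invRev (z.toWord.take s)).head? ≠ some β := by
    intro z hz
    obtain ⟨c, hc1, hc2, hdrop, hword, hsum, -⟩ := mc z w⁻¹
    rw [wlen_inv] at hc2 hsum
    rw [hz.1] at hsum
    have hz2 := hz.2
    have hcc : c = cdef := by omega
    have hwc : wlen z - c = s := by omega
    have hzlen : z.toWord.length = wlen z := rfl
    rw [hwc, hcc] at hword hdrop
    have htake_len : (z.toWord.take s).length = s := by
      rw [List.length_take]; omega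
    have hzword : z.toWord = z.toWord.take s ++ invRev (lw.take cdef) := by
      conv_lhs => rw [← List.take_append_drop s z.toWord]
      rw [hdrop]
    have hred2 : IsRed (invRev (z.toWord.take s)) := isRed_invRev ((isRed_toWord z).take s)
    refine ⟨htake_len, hzword, hred2, ?_⟩
    by_cases hs0 : s = 0
    · subst hs0
      rw [List.take_zero]
      intro hcon
      simp [invRev] at hcon
    · have hcd_lt : cdef < lw.length := by omega
      have hredword := isRed_toWord (z * w⁻¹)
      rw [hword] at hredword
      obtain ⟨-, -, hjun⟩ := List.isChain_append.mp hredword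
      have hA : (z.toWord.take s) ≠ [] := by
        apply List.ne_nil_of_length_pos; omega
      have hlast := List.getLast?_eq_getLast hA
      have hBhead : (lw.drop cdef).head? = some (lw[cdef]) := by
        rw [List.head?_drop, List.getElem?_eq_getElem hcd_lt]
      have hrl := hjun _ (by rw [hlast]; rfl) _ (by rw [hBhead]; rfl)
      rw [Rl_iff] at hrl
      rw [head?_invRev, hlast]
      rw [Option.map_some]
      intro hcontra
      have hβval : β = lw[cdef] := by
        rw [hβ, List.getElem?_eq_getElem hcd_lt]
        rfl
      apply hrl
      rw [hβval] at hcontra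
      have := Option.some.inj hcontra
      rw [← this]
  have hbd := tsum_uind_le_card
    (fun z : FreeGroup (Fin r) => wlen (z * w⁻¹) = k ∧ wlen z + k = wlen w + 2 * s)
    (β := List.Vector (Fin (2*r-1)) s)
    (fun z => ⟨encList r hr β (invRev (z.1.toWord.take s)), by
      rw [encList_length, invRev_length]; exact (zfact z.1 z.2).1⟩) ?_
  · refine le_trans hbd ?_
    rw [card_vector, Fintype.card_fin]
  · rintro ⟨z, hz⟩ ⟨z', hz'⟩ h
    have henc := congrArg Subtype.val h
    simp only at henc
    obtain ⟨hlen1, hword1, hred1, hh1⟩ := zfact z hz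
    obtain ⟨hlen2, hword2, hred2, hh2⟩ := zfact z' hz'
    have heq : invRev (z.toWord.take s) = invRev (z'.toWord.take s) :=
      encList_inj r hr _ _ _ hred1 hred2 hh1 hh2 henc
    have htk : z.toWord.take s = z'.toWord.take s := invRev_injective heq
    apply Subtype.ext
    apply toWord_injective
    rw [hword1, hword2, htk]

lemma Num_le (hr : 2 ≤ r) (n m : ℕ) (t : FreeGroup (Fin r)) :
    ∑' u : FreeGroup (Fin r), uind (wlen u = n ∧ wlen (u * t) = m)
      ≤ ∑ j ∈ Finset.range (min n m + 1),
          uind (n + m = wlen t + 2*j) * (Wn r j : ℝ≥0∞) := by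
  by_cases hex : ∃ u : FreeGroup (Fin r), wlen u = n ∧ wlen (u * t) = m
  · obtain ⟨u₀, hu₀⟩ := hex
    obtain ⟨c₀, hc01, hc02, -, -, hsum₀, -⟩ := mc u₀ t
    rw [hu₀.1, hu₀.2] at hsum₀
    rw [hu₀.1] at hc01
    have hjmem : n - c₀ ∈ Finset.range (min n m + 1) := by
      simp only [Finset.mem_range]; omega
    have hcond : n + m = wlen t + 2*(n - c₀) := by omega
    have hkey : ∀ u : FreeGroup (Fin r), (wlen u = n ∧ wlen (u * t) = m) →
        wlen (u * FreeGroup.mk (t.toWord.take c₀)) = n - c₀ := by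
      intro u hu
      obtain ⟨c, hc1, hc2, -, -, hsum, hlast⟩ := mc u t
      rw [hu.1] at hsum hlast hc1
      rw [hu.2] at hsum
      have hcc : c = c₀ := by omega
      rw [hcc] at hlast
      omega
    calc ∑' u : FreeGroup (Fin r), uind (wlen u = n ∧ wlen (u * t) = m)
        ≤ ∑' u : FreeGroup (Fin r), uind (wlen (u * FreeGroup.mk (t.toWord.take c₀)) = n - c₀) :=
          ENNReal.tsum_le_tsum fun u => uind_mono (hkey u)
      _ = ∑' v : FreeGroup (Fin r), uind (wlen v = n - c₀) :=
          Equiv.tsum_eq (Equiv.mulRight (FreeGroup.mk (t.toWord.take c₀)))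
            (fun v => uind (wlen v = n - c₀))
      _ ≤ (Wn r (n - c₀) : ℝ≥0∞) := count_sphere r hr _
      _ = uind (n + m = wlen t + 2*(n - c₀)) * (Wn r (n - c₀) : ℝ≥0∞) := by
          rw [uind_of_true hcond, one_mul]
      _ ≤ ∑ j ∈ Finset.range (min n m + 1),
            uind (n + m = wlen t + 2*j) * (Wn r j : ℝ≥0∞) :=
          Finset.single_le_sum
            (f := fun j => uind (n + m = wlen t + 2*j) * (Wn r j : ℝ≥0∞))
            (fun i _ => zero_le) hjmem
  · push_neg at hex
    have hz : ∀ u : FreeGroup (Fin r), uind (wlen u = n ∧ wlen (u * t) = m) = 0 := fun u =>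
      uind_of_false (fun hcon => hex u hcon.1 hcon.2)
    rw [ENNReal.tsum_eq_zero.mpr hz]
    exact zero_le

lemma one_bd (hr : 2 ≤ r) (w : FreeGroup (Fin r)) (k : ℕ) :
    ∑' z : FreeGroup (Fin r), uind (wlen (z * w⁻¹) = k ∧ wlen z ≤ wlen w)
      ≤ ∑ s ∈ Finset.range (k/2 + 1), (((2*r-1)^s : ℕ) : ℝ≥0∞) := by
  have hpt : ∀ z : FreeGroup (Fin r), uind (wlen (z * w⁻¹) = k ∧ wlen z ≤ wlen w)
      ≤ ∑ s ∈ Finset.range (k/2+1),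
          uind (wlen (z * w⁻¹) = k ∧ wlen z + k = wlen w + 2*s) := by
    intro z
    by_cases hz : wlen (z * w⁻¹) = k ∧ wlen z ≤ wlen w
    · obtain ⟨c, hc1, hc2, -, -, hsum, -⟩ := mc z w⁻¹
      rw [wlen_inv] at hc2 hsum
      rw [hz.1] at hsum
      have hz2 := hz.2
      have hseq : wlen z + k = wlen w + 2*(wlen z - c) := by omega
      have hsmem : wlen z - c ∈ Finset.range (k/2+1) := by
        simp only [Finset.mem_range]; omega
      calc uind (wlen (z * w⁻¹) = k ∧ wlen z ≤ wlen w) = 1 := uind_of_true hz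
        _ = uind (wlen (z * w⁻¹) = k ∧ wlen z + k = wlen w + 2*(wlen z - c)) :=
            (uind_of_true ⟨hz.1, hseq⟩).symm
        _ ≤ _ := Finset.single_le_sum
            (f := fun s => uind (wlen (z * w⁻¹) = k ∧ wlen z + k = wlen w + 2*s))
            (fun i _ => zero_le) hsmem
    · rw [uind_of_false hz]; exact zero_le
  calc ∑' z : FreeGroup (Fin r), uind (wlen (z * w⁻¹) = k ∧ wlen z ≤ wlen w)
      ≤ ∑' z : FreeGroup (Fin r), ∑ s ∈ Finset.range (k/2+1),
          uind (wlen (z * w⁻¹) = k ∧ wlen z + k = wlen w + 2*s) := ENNReal.tsum_le_tsum hpt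
    _ = ∑ s ∈ Finset.range (k/2+1), ∑' z : FreeGroup (Fin r),
          uind (wlen (z * w⁻¹) = k ∧ wlen z + k = wlen w + 2*s) :=
        Summable.tsum_finsetSum (fun i _ => ENNReal.summable)
    _ ≤ ∑ s ∈ Finset.range (k/2 + 1), (((2*r-1)^s : ℕ) : ℝ≥0∞) := by
        apply Finset.sum_le_sum
        intro s hsm
        simp only [Finset.mem_range] at hsm
        exact count_s r hr w k s (by omega)


/-! ### part 4 -/

lemma uind_le_one {p : Prop} : uind p ≤ 1 := by
  classical
  by_cases h : p
  · rw [uind_of_true h]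
  · rw [uind_of_false h]; exact zero_le

lemma uind_le_add {p q1 q2 : Prop} (h : p → q1 ∨ q2) : uind p ≤ uind q1 + uind q2 := by
  classical
  by_cases hp : p
  · rcases h hp with h1 | h2
    · rw [uind_of_true h1]
      exact le_trans uind_le_one le_self_add
    · rw [uind_of_true h2]
      exact le_trans uind_le_one le_add_self
  · rw [uind_of_false hp]; exact zero_le

lemma wlen_symm {α : Type*} [DecidableEq α] (z w : FreeGroup α) :
    wlen (w * z⁻¹) = wlen (z * w⁻¹) := by
  rw [← wlen_inv (w * z⁻¹)]
  simp [mul_inv_rev]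

/-- geometric sum -/
def Dn (r S : ℕ) : ℕ := ∑ s ∈ Finset.range (S+1), (2*r-1)^s

lemma pair_bd (r : ℕ) (hr : 2 ≤ r) (E : Finset (FreeGroup (Fin r))) (k : ℕ) :
    ∑ z ∈ E, ∑ w ∈ E, uind (wlen (z * w⁻¹) = k)
      ≤ ((2 * Dn r (k/2) : ℕ) : ℝ≥0∞) * E.card := by
  have hone : ∀ w : FreeGroup (Fin r),
      ∑' z : FreeGroup (Fin r), uind (wlen (z * w⁻¹) = k ∧ wlen z ≤ wlen w)
        ≤ ((Dn r (k/2) : ℕ) : ℝ≥0∞) := by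
    intro w
    refine le_trans (one_bd r hr w k) (le_of_eq ?_)
    rw [Dn]
    push_cast
    rfl
  have hsplit : ∀ z w : FreeGroup (Fin r), uind (wlen (z * w⁻¹) = k)
      ≤ uind (wlen (z * w⁻¹) = k ∧ wlen z ≤ wlen w)
        + uind (wlen (w * z⁻¹) = k ∧ wlen w ≤ wlen z) := by
    intro z w
    apply uind_le_add
    intro hp
    rcases le_total (wlen z) (wlen w) with hle | hle
    · exact Or.inl ⟨hp, hle⟩
    · exact Or.inr ⟨by rw [wlen_symm]; exact hp, hle⟩
  calc ∑ z ∈ E, ∑ w ∈ E, uind (wlen (z * w⁻¹) = k)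
      ≤ ∑ z ∈ E, ∑ w ∈ E, (uind (wlen (z * w⁻¹) = k ∧ wlen z ≤ wlen w)
          + uind (wlen (w * z⁻¹) = k ∧ wlen w ≤ wlen z)) :=
        Finset.sum_le_sum fun z _ => Finset.sum_le_sum fun w _ => hsplit z w
    _ = (∑ z ∈ E, ∑ w ∈ E, uind (wlen (z * w⁻¹) = k ∧ wlen z ≤ wlen w))
          + ∑ z ∈ E, ∑ w ∈ E, uind (wlen (w * z⁻¹) = k ∧ wlen w ≤ wlen z) := by
        rw [← Finset.sum_add_distrib]
        exact Finset.sum_congr rfl fun z _ => Finset.sum_add_distrib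
    _ ≤ ((Dn r (k/2) : ℕ) : ℝ≥0∞) * E.card + ((Dn r (k/2) : ℕ) : ℝ≥0∞) * E.card := by
        gcongr ?_ + ?_
        · rw [Finset.sum_comm]
          calc ∑ w ∈ E, ∑ z ∈ E, uind (wlen (z * w⁻¹) = k ∧ wlen z ≤ wlen w)
              ≤ ∑ w ∈ E, ((Dn r (k/2) : ℕ) : ℝ≥0∞) := by
                refine Finset.sum_le_sum fun w _ => ?_
                refine le_trans ?_ (hone w)
                exact ENNReal.sum_le_tsum E
            _ = ((Dn r (k/2) : ℕ) : ℝ≥0∞) * E.card := by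
                rw [Finset.sum_const, nsmul_eq_mul, mul_comm]
        · calc ∑ z ∈ E, ∑ w ∈ E, uind (wlen (w * z⁻¹) = k ∧ wlen w ≤ wlen z)
              ≤ ∑ z ∈ E, ((Dn r (k/2) : ℕ) : ℝ≥0∞) := by
                refine Finset.sum_le_sum fun z _ => ?_
                refine le_trans ?_ (hone z)
                exact ENNReal.sum_le_tsum E
            _ = ((Dn r (k/2) : ℕ) : ℝ≥0∞) * E.card := by
                rw [Finset.sum_const, nsmul_eq_mul, mul_comm]
    _ = ((2 * Dn r (k/2) : ℕ) : ℝ≥0∞) * E.card := by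
        push_cast
        ring

lemma arith (r : ℕ) (hr : 2 ≤ r) (j S : ℕ) :
    Wn r j * (2 * Dn r S) ≤ 4 * (2*r-1)^(j+S) := by
  have hq : 3 ≤ 2*r-1 := by omega
  have hD : 2 * Dn r S ≤ 3 * (2*r-1)^S := by
    induction S with
    | zero => simp [Dn]
    | succ S ih =>
      have hstep : Dn r (S+1) = Dn r S + (2*r-1)^(S+1) := by
        rw [Dn, Dn, Finset.sum_range_succ]
      have hpow : 3 * (2*r-1)^S ≤ (2*r-1)^(S+1) := by
        rw [pow_succ]
        calc 3 * (2*r-1)^S = (2*r-1)^S * 3 := by ring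
          _ ≤ (2*r-1)^S * (2*r-1) := Nat.mul_le_mul_left _ hq
      omega
  cases j with
  | zero =>
    rw [Wn]
    simp only [if_true, one_mul, Nat.zero_add]
    have : (3:ℕ) * (2*r-1)^S ≤ 4 * (2*r-1)^S := by
      apply Nat.mul_le_mul_right
      omega
    omega
  | succ j' =>
    rw [Wn]
    simp only [Nat.succ_ne_zero, if_false, Nat.add_sub_cancel]
    calc (2*r) * (2*r-1)^j' * (2 * Dn r S)
        ≤ (2*r) * (2*r-1)^j' * (3 * (2*r-1)^S) := Nat.mul_le_mul_left _ hD
      _ = (6*r) * ((2*r-1)^j' * (2*r-1)^S) := by ring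
      _ = (6*r) * (2*r-1)^(j'+S) := by rw [pow_add]
      _ ≤ (4*(2*r-1)) * (2*r-1)^(j'+S) := by
          apply Nat.mul_le_mul_right
          omega
      _ = 4 * (2*r-1)^(j'+S+1) := by rw [pow_succ]; ring
      _ = 4 * (2*r-1)^(j'+1+S) := by
          congr 1
          rw [show j'+S+1 = j'+1+S by omega]

lemma key_estimate (r : ℕ) (hr : 2 ≤ r) (E : Finset (FreeGroup (Fin r))) (n m : ℕ) :
    ∑ z ∈ E, ∑ w ∈ E,
        (∑' u : FreeGroup (Fin r), uind (wlen u = n ∧ wlen (u * (z * w⁻¹)) = m))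
      ≤ (((4 * ((min n m + 1) * (2*r-1)^((n+m)/2))) : ℕ) : ℝ≥0∞) * E.card := by
  calc ∑ z ∈ E, ∑ w ∈ E,
        (∑' u : FreeGroup (Fin r), uind (wlen u = n ∧ wlen (u * (z * w⁻¹)) = m))
      ≤ ∑ z ∈ E, ∑ w ∈ E, ∑ j ∈ Finset.range (min n m + 1),
          uind (n + m = wlen (z * w⁻¹) + 2*j) * (Wn r j : ℝ≥0∞) :=
        Finset.sum_le_sum fun z _ => Finset.sum_le_sum fun w _ => Num_le r hr n m (z * w⁻¹)
    _ = ∑ j ∈ Finset.range (min n m + 1), (Wn r j : ℝ≥0∞)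
          * ∑ z ∈ E, ∑ w ∈ E, uind (n + m = wlen (z * w⁻¹) + 2*j) := by
        rw [Finset.sum_congr rfl fun z _ => Finset.sum_comm, Finset.sum_comm]
        refine Finset.sum_congr rfl fun j _ => ?_
        rw [Finset.mul_sum]
        refine Finset.sum_congr rfl fun z _ => ?_
        rw [Finset.mul_sum]
        refine Finset.sum_congr rfl fun w _ => ?_
        rw [mul_comm]
    _ ≤ ∑ j ∈ Finset.range (min n m + 1), (Wn r j : ℝ≥0∞)
          * (((2 * Dn r ((n+m)/2 - j) : ℕ) : ℝ≥0∞) * E.card) := by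
        refine Finset.sum_le_sum fun j hj => ?_
        refine mul_le_mul_right ?_ _
        simp only [Finset.mem_range] at hj
        have hj2 : 2*j ≤ n + m := by omega
        have hcond : ∀ z w : FreeGroup (Fin r),
            (n + m = wlen (z * w⁻¹) + 2*j) → wlen (z * w⁻¹) = n + m - 2*j := by
          intro z w h; omega
        refine le_trans (Finset.sum_le_sum fun z _ => Finset.sum_le_sum fun w _ =>
          uind_mono (hcond z w)) ?_
        refine le_trans (pair_bd r hr E (n + m - 2*j)) (le_of_eq ?_)
        have hdiv : (n + m - 2*j)/2 = (n+m)/2 - j := by omega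
        rw [hdiv]
    _ ≤ ∑ j ∈ Finset.range (min n m + 1),
          ((4 * (2*r-1)^((n+m)/2) : ℕ) : ℝ≥0∞) * E.card := by
        refine Finset.sum_le_sum fun j hj => ?_
        simp only [Finset.mem_range] at hj
        rw [← mul_assoc]
        refine mul_le_mul_left ?_ _
        have harith := arith r hr j ((n+m)/2 - j)
        have hjS : j + ((n+m)/2 - j) = (n+m)/2 := by omega
        rw [hjS] at harith
        calc (Wn r j : ℝ≥0∞) * ((2 * Dn r ((n+m)/2 - j) : ℕ) : ℝ≥0∞)
            = ((Wn r j * (2 * Dn r ((n+m)/2 - j)) : ℕ) : ℝ≥0∞) := by push_cast; ring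
          _ ≤ ((4 * (2*r-1)^((n+m)/2) : ℕ) : ℝ≥0∞) := by exact_mod_cast harith
    _ = (((4 * ((min n m + 1) * (2*r-1)^((n+m)/2))) : ℕ) : ℝ≥0∞) * E.card := by
        rw [Finset.sum_const, Finset.card_range, nsmul_eq_mul]
        push_cast
        ring

lemma expand_nm {G : Type*} (φ ψ : G → ℕ) (aN : ℕ → ℝ≥0∞) :
    ∑' u : G, aN (φ u) * aN (ψ u)
      = ∑' p : ℕ × ℕ, aN p.1 * aN p.2 * ∑' u : G, uind (φ u = p.1 ∧ ψ u = p.2) := by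
  have h1 : ∀ p : ℕ × ℕ, aN p.1 * aN p.2 * ∑' u : G, uind (φ u = p.1 ∧ ψ u = p.2)
      = ∑' u : G, aN p.1 * aN p.2 * uind (φ u = p.1 ∧ ψ u = p.2) :=
    fun p => (ENNReal.tsum_mul_left).symm
  rw [tsum_congr h1, ENNReal.tsum_comm]
  refine tsum_congr fun u => ?_
  rw [tsum_eq_single (⟨φ u, ψ u⟩ : ℕ × ℕ)]
  · rw [uind_of_true ⟨rfl, rfl⟩, mul_one]
  · intro p hp
    rw [uind_of_false, mul_zero]
    intro hcon
    apply hp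
    exact Prod.ext_iff.mpr ⟨hcon.1.symm, hcon.2.symm⟩


end RWT

open RWT

/-- If `A(f) = Σ_{n,m} f_n f_m q^{(n+m)/2} (1 + min(n,m)) < ∞`, then for every finite
subset `E` of the free group, `Σ_x ((f∗χ_E)(x))² ≤ 4 A(f) |E|`, where
`f = Σ_n f_n χ_n` is the radial function with nonnegative coefficients `f_n`. -/
theorem radial_weak_type_two_two_upper
    (r : ℕ) (hr : 2 ≤ r) (q : ℕ) (hq : q = 2 * r - 1)
    (a : ℕ → ℝ) (ha : ∀ n, 0 ≤ a n)
    (A : ℝ≥0∞)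
    (hA : A = ∑' p : ℕ × ℕ,
        ENNReal.ofReal (a p.1) * ENNReal.ofReal (a p.2) *
          (q : ℝ≥0∞) ^ ((((p.1 : ℝ) + (p.2 : ℝ))) / 2) *
          ((1 + min p.1 p.2 : ℕ) : ℝ≥0∞))
    (hAfin : A ≠ ∞)
    (E : Finset (FreeGroup (Fin r))) :
    ∑' x : FreeGroup (Fin r),
        (conv (fun y => ENNReal.ofReal (a (wlen y))) (finInd E) x) ^ 2
      ≤ 4 * A * (E.card : ℝ≥0∞) := by
  classical
  have hconv : ∀ x : FreeGroup (Fin r),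
      conv (fun y => ENNReal.ofReal (a (wlen y))) (finInd E) x
        = ∑ z ∈ E, ENNReal.ofReal (a (wlen (x * z⁻¹))) := by
    intro x
    rw [conv]
    rw [← Equiv.tsum_eq ((Equiv.inv (FreeGroup (Fin r))).trans (Equiv.mulLeft x))
      (fun y => ENNReal.ofReal (a (wlen y)) * finInd E (y⁻¹ * x))]
    have hterm : ∀ z : FreeGroup (Fin r),
        ENNReal.ofReal (a (wlen ((((Equiv.inv (FreeGroup (Fin r))).trans (Equiv.mulLeft x))) z)))
          * finInd E (((((Equiv.inv (FreeGroup (Fin r))).trans (Equiv.mulLeft x))) z)⁻¹ * x)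
        = ENNReal.ofReal (a (wlen (x * z⁻¹))) * finInd E z := by
      intro z
      simp only [Equiv.trans_apply, Equiv.inv_apply, Equiv.coe_mulLeft]
      have hz : (x * z⁻¹)⁻¹ * x = z := by group
      rw [hz]
    rw [tsum_congr hterm]
    rw [tsum_eq_sum (s := E) (fun z hz => by rw [finInd, if_neg hz, mul_zero])]
    exact Finset.sum_congr rfl fun z hz => by rw [finInd, if_pos hz, mul_one]
  calc ∑' x : FreeGroup (Fin r),
        (conv (fun y => ENNReal.ofReal (a (wlen y))) (finInd E) x) ^ 2
      = ∑' x : FreeGroup (Fin r), ∑ z ∈ E, ∑ w ∈ E,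
          ENNReal.ofReal (a (wlen (x * z⁻¹))) * ENNReal.ofReal (a (wlen (x * w⁻¹))) := by
        refine tsum_congr fun x => ?_
        rw [hconv x, sq, Finset.sum_mul_sum]
    _ = ∑ z ∈ E, ∑ w ∈ E, ∑' x : FreeGroup (Fin r),
          ENNReal.ofReal (a (wlen (x * z⁻¹))) * ENNReal.ofReal (a (wlen (x * w⁻¹))) := by
        rw [Summable.tsum_finsetSum (fun z _ => ENNReal.summable)]
        exact Finset.sum_congr rfl fun z _ => Summable.tsum_finsetSum (fun w _ => ENNReal.summable)
    _ = ∑ z ∈ E, ∑ w ∈ E, ∑' u : FreeGroup (Fin r),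
          ENNReal.ofReal (a (wlen u)) * ENNReal.ofReal (a (wlen (u * (z * w⁻¹)))) := by
        refine Finset.sum_congr rfl fun z _ => Finset.sum_congr rfl fun w _ => ?_
        rw [← Equiv.tsum_eq (Equiv.mulRight z)
          (fun x => ENNReal.ofReal (a (wlen (x * z⁻¹))) * ENNReal.ofReal (a (wlen (x * w⁻¹))))]
        refine tsum_congr fun u => ?_
        simp only [Equiv.coe_mulRight]
        rw [mul_inv_cancel_right, mul_assoc]
    _ = ∑ z ∈ E, ∑ w ∈ E, ∑' p : ℕ × ℕ,
          ENNReal.ofReal (a p.1) * ENNReal.ofReal (a p.2)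
            * ∑' u : FreeGroup (Fin r), uind (wlen u = p.1 ∧ wlen (u * (z * w⁻¹)) = p.2) := by
        refine Finset.sum_congr rfl fun z _ => Finset.sum_congr rfl fun w _ => ?_
        exact expand_nm wlen (fun u => wlen (u * (z * w⁻¹))) (fun n => ENNReal.ofReal (a n))
    _ = ∑' p : ℕ × ℕ, ENNReal.ofReal (a p.1) * ENNReal.ofReal (a p.2)
          * ∑ z ∈ E, ∑ w ∈ E,
            ∑' u : FreeGroup (Fin r), uind (wlen u = p.1 ∧ wlen (u * (z * w⁻¹)) = p.2) := by
        rw [Finset.sum_congr rfl fun z (_ : z ∈ E) =>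
          (Summable.tsum_finsetSum (fun w (_ : w ∈ E) => ENNReal.summable)).symm]
        rw [← Summable.tsum_finsetSum (fun z (_ : z ∈ E) => ENNReal.summable)]
        refine tsum_congr fun p => ?_
        simp only [← Finset.mul_sum]
    _ ≤ ∑' p : ℕ × ℕ, ENNReal.ofReal (a p.1) * ENNReal.ofReal (a p.2)
          * ((((4 * ((min p.1 p.2 + 1) * (2*r-1)^((p.1+p.2)/2))) : ℕ) : ℝ≥0∞) * E.card) :=
        ENNReal.tsum_le_tsum fun p => mul_le_mul_right (key_estimate r hr E p.1 p.2) _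
    _ ≤ 4 * A * (E.card : ℝ≥0∞) := by
        rw [hA]
        have hrhs : 4 * (∑' p : ℕ × ℕ,
            ENNReal.ofReal (a p.1) * ENNReal.ofReal (a p.2) *
              (q : ℝ≥0∞) ^ ((((p.1 : ℝ) + (p.2 : ℝ))) / 2) *
              ((1 + min p.1 p.2 : ℕ) : ℝ≥0∞)) * (E.card : ℝ≥0∞)
          = ∑' p : ℕ × ℕ, 4 * (ENNReal.ofReal (a p.1) * ENNReal.ofReal (a p.2) *
              (q : ℝ≥0∞) ^ ((((p.1 : ℝ) + (p.2 : ℝ))) / 2) *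
              ((1 + min p.1 p.2 : ℕ) : ℝ≥0∞)) * (E.card : ℝ≥0∞) := by
          rw [ENNReal.tsum_mul_right, ENNReal.tsum_mul_left]
        rw [hrhs]
        refine ENNReal.tsum_le_tsum fun p => ?_
        have hcast : (((4 * ((min p.1 p.2 + 1) * (2*r-1)^((p.1+p.2)/2))) : ℕ) : ℝ≥0∞)
            ≤ 4 * ((q : ℝ≥0∞) ^ ((((p.1 : ℝ) + (p.2 : ℝ))) / 2)
                * ((1 + min p.1 p.2 : ℕ) : ℝ≥0∞)) := by
          rw [← hq]
          push_cast
          have hqr : (1 : ℝ≥0∞) ≤ (q : ℝ≥0∞) := by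
            exact_mod_cast (by omega : 1 ≤ q)
          have hexp : (((p.1+p.2)/2 : ℕ) : ℝ) ≤ (((p.1 : ℝ) + (p.2 : ℝ))) / 2 := by
            refine le_trans (Nat.cast_div_le) ?_
            push_cast
            exact le_refl _
          have hpow : (q : ℝ≥0∞) ^ (((p.1+p.2)/2 : ℕ))
              ≤ (q : ℝ≥0∞) ^ ((((p.1 : ℝ) + (p.2 : ℝ))) / 2) := by
            rw [← ENNReal.rpow_natCast]
            exact ENNReal.rpow_le_rpow_of_exponent_le hqr hexp
          refine le_trans (le_of_eq (by ring)) (le_trans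
            (mul_le_mul_right hpow ((4:ℝ≥0∞) * (((min p.1 p.2 : ℕ) : ℝ≥0∞) + 1)))
            (le_of_eq (by push_cast; ring)))
        calc ENNReal.ofReal (a p.1) * ENNReal.ofReal (a p.2)
              * ((((4 * ((min p.1 p.2 + 1) * (2*r-1)^((p.1+p.2)/2))) : ℕ) : ℝ≥0∞) * E.card)
            ≤ ENNReal.ofReal (a p.1) * ENNReal.ofReal (a p.2)
              * ((4 * ((q : ℝ≥0∞) ^ ((((p.1 : ℝ) + (p.2 : ℝ))) / 2)
                * ((1 + min p.1 p.2 : ℕ) : ℝ≥0∞))) * E.card) :=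
              mul_le_mul_right (mul_le_mul_left hcast _) _
          _ = 4 * (ENNReal.ofReal (a p.1) * ENNReal.ofReal (a p.2) *
              (q : ℝ≥0∞) ^ ((((p.1 : ℝ) + (p.2 : ℝ))) / 2) *
              ((1 + min p.1 p.2 : ℕ) : ℝ≥0∞)) * (E.card : ℝ≥0∞) := by ring
end
end

section
/- Let f_n ≥ 0 for n ∈ ℕ and let f = Σ_{n=0}^∞ f_n χ_n be the corresponding radial function on the free group F. If there is a constant C such that Σ_{x∈F} ((f∗χ_E)(x))² ≤ C · |E| for every finite nonempty subset E ⊆ F, then A(f) = Σ_{n,m=0}^∞ f_n f_m q^{(n+m)/2} (1 + min(n,m)) ≤ 6C. In particular, if the radial convolution operator λ(f) with nonnegative coefficients is of weak type (2,2) then A(f) < ∞, and (1/6) A(f) ≤ ‖λ(f)‖²_{2→(2,∞)}. -/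
open scoped ENNReal

noncomputable section

namespace RadialAux

open FreeGroup List

variable {r : ℕ}

/-- reducedness of a word -/
def IsRed (w : List (Fin r × Bool)) : Prop :=
  List.Chain' (fun a b => ¬(a.1 = b.1 ∧ a.2 = !b.2)) w

theorem reduce_eq_self_of_isRed {w : List (Fin r × Bool)} (h : IsRed w) :
    FreeGroup.reduce w = w := by
  induction w with
  | nil => rfl
  | cons a w ih =>
    have hw : IsRed w := h.tail
    have hred : FreeGroup.reduce w = w := ih hw
    rw [FreeGroup.reduce.cons, hred]
    cases w with
    | nil => rfl
    | cons b t =>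
      have : ¬(a.1 = b.1 ∧ a.2 = !b.2) := List.isChain_cons_cons.mp h |>.1
      simp [this]

theorem isRed_of_reduce_eq_self {w : List (Fin r × Bool)} (h : FreeGroup.reduce w = w) :
    IsRed w := by
  induction w with
  | nil => exact List.isChain_nil
  | cons a w ih =>
    have hle : (FreeGroup.reduce w).length ≤ w.length :=
      (FreeGroup.reduce.red (L := w)).length_le
    rw [FreeGroup.reduce.cons] at h
    rcases hrw : FreeGroup.reduce w with _ | ⟨b, t⟩ <;> rw [hrw] at h hle
    · simp only at h
      have hw : w = [] := by injection h with _ h2; exact h2.symm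
      subst hw
      exact List.isChain_singleton a
    · simp only at h
      by_cases hc : a.1 = b.1 ∧ a.2 = !b.2
      · rw [if_pos hc] at h
        have := congrArg List.length h
        simp only [List.length_cons] at this hle
        omega
      · rw [if_neg hc] at h
        have hw : w = b :: t := by injection h with _ h2; exact h2.symm
        have hred : IsRed w := ih (by rw [hrw, ← hw])
        rw [hw]
        exact List.isChain_cons_cons.mpr ⟨hc, hw ▸ hred⟩

theorem isRed_toWord (x : FreeGroup (Fin r)) : IsRed x.toWord :=
  isRed_of_reduce_eq_self (FreeGroup.reduce_toWord x)

theorem toWord_mk_of_isRed {w : List (Fin r × Bool)} (h : IsRed w) :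
    (FreeGroup.mk w).toWord = w := by
  rw [FreeGroup.toWord_mk, reduce_eq_self_of_isRed h]

variable (r) in
/-- Finset of reduced words of length `s` whose head does not cancel the
optional constraint letter `o`. -/
def WF : Option (Fin r × Bool) → ℕ → Finset (List (Fin r × Bool))
  | _, 0 => {[]}
  | o, s+1 =>
    (Finset.univ.filter
        (fun d : Fin r × Bool => ∀ c ∈ o, ¬(c.1 = d.1 ∧ c.2 = !d.2))).biUnion
      (fun d => (WF (some d) s).image (fun u => d :: u))

theorem mem_WF {o : Option (Fin r × Bool)} {s : ℕ} {w : List (Fin r × Bool)} :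
    w ∈ WF r o s ↔
      w.length = s ∧ IsRed w ∧ ∀ c ∈ o, ∀ d ∈ w.head?, ¬(c.1 = d.1 ∧ c.2 = !d.2) := by
  induction s generalizing o w with
  | zero =>
    simp only [WF, Finset.mem_singleton]
    constructor
    · rintro rfl
      exact ⟨rfl, List.isChain_nil, by simp⟩
    · rintro ⟨h, -, -⟩
      exact List.length_eq_zero_iff.mp h
  | succ s ih =>
    simp only [WF, Finset.mem_biUnion, Finset.mem_filter, Finset.mem_univ, true_and,
      Finset.mem_image]
    constructor
    · rintro ⟨d, hd, u, hu, rfl⟩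
      obtain ⟨hlen, hred, hhead⟩ := ih.mp hu
      refine ⟨by simp [hlen], ?_, ?_⟩
      · cases u with
        | nil => exact List.isChain_singleton d
        | cons b t =>
          refine List.isChain_cons_cons.mpr ⟨?_, hred⟩
          exact hhead d rfl b rfl
      · intro c hc e he
        simp only [List.head?_cons, Option.mem_def, Option.some.injEq] at he
        subst he
        exact hd c hc
    · rintro ⟨hlen, hred, hhead⟩
      cases w with
      | nil => simp at hlen
      | cons d u =>
        refine ⟨d, ?_, u, ?_, rfl⟩
        · intro c hc
          exact hhead c hc d rfl
        · refine ih.mpr ⟨by simpa using hlen, hred.tail, ?_⟩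
          intro c hc e he
          simp only [Option.mem_def, Option.some.injEq] at hc
          subst hc
          cases u with
          | nil => simp at he
          | cons b t =>
            simp only [List.head?_cons, Option.mem_def, Option.some.injEq] at he
            subst he
            exact (List.isChain_cons_cons.mp hred).1

theorem card_WF_some (c : Fin r × Bool) (s : ℕ) :
    (WF r (some c) s).card = (2 * r - 1) ^ s := by
  induction s generalizing c with
  | zero => simp [WF]
  | succ s ih =>
    rw [WF, Finset.card_biUnion]
    · have hcard : ∀ d : Fin r × Bool,
          ((WF r (some d) s).image (fun u => d :: u)).card = (2 * r - 1) ^ s := by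
        intro d
        rw [Finset.card_image_of_injective _ (fun u v h => by injection h), ih]
      rw [Finset.sum_congr rfl (fun d _ => hcard d)]
      rw [Finset.sum_const, smul_eq_mul, pow_succ, mul_comm ((2*r-1)^s)]
      congr 1
      have : (Finset.univ.filter
          (fun d : Fin r × Bool => ∀ c' ∈ some c, ¬(c'.1 = d.1 ∧ c'.2 = !d.2))) =
          Finset.univ.erase (c.1, !c.2) := by
        ext d
        simp only [Finset.mem_filter, Finset.mem_univ, true_and, Finset.mem_erase,
          Option.mem_def, Option.some.injEq, and_true]
        constructor
        · intro h he
          subst he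
          exact h c rfl ⟨rfl, by simp⟩
        · rintro h c' rfl ⟨h1, h2⟩
          refine h ?_
          obtain ⟨d1, d2⟩ := d
          simp only at h1 h2
          simp [← h1, h2]
      rw [this, Finset.card_erase_of_mem (Finset.mem_univ _), Finset.card_univ]
      simp [Fintype.card_prod, Fintype.card_bool]
      ring_nf
    · intro x _ y _ hxy
      rw [Function.onFun, Finset.disjoint_left]
      rintro w hw hw'
      simp only [Finset.mem_image] at hw hw'
      obtain ⟨u, -, rfl⟩ := hw
      obtain ⟨v, -, hv⟩ := hw'
      exact hxy (by injection hv with h1 _; exact h1.symm)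

theorem card_WF_none (s : ℕ) :
    (WF r none (s+1)).card = 2 * r * (2 * r - 1) ^ s := by
  rw [WF, Finset.card_biUnion]
  · have hcard : ∀ d : Fin r × Bool,
        ((WF r (some d) s).image (fun u => d :: u)).card = (2 * r - 1) ^ s := by
      intro d
      rw [Finset.card_image_of_injective _ (fun u v h => by injection h), card_WF_some]
    rw [Finset.sum_congr rfl (fun d _ => hcard d)]
    rw [Finset.sum_const, smul_eq_mul]
    congr 1
    have : (Finset.univ.filter
        (fun d : Fin r × Bool => ∀ c' ∈ (none : Option (Fin r × Bool)), ¬(c'.1 = d.1 ∧ c'.2 = !d.2))) =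
        Finset.univ := by
      ext d; simp
    rw [this, Finset.card_univ]
    simp [Fintype.card_prod, Fintype.card_bool]
    ring_nf
  · intro x _ y _ hxy
    rw [Function.onFun, Finset.disjoint_left]
    rintro w hw hw'
    simp only [Finset.mem_image] at hw hw'
    obtain ⟨u, -, rfl⟩ := hw
    obtain ⟨v, -, hv⟩ := hw'
    exact hxy (by injection hv with h1 _; exact h1.symm)

/-! ### Spheres and balls -/

variable (r) in
def sphereF (s : ℕ) : Finset (FreeGroup (Fin r)) := (WF r none s).image FreeGroup.mk

variable (r) in
def ballF (N : ℕ) : Finset (FreeGroup (Fin r)) := (Finset.range (N+1)).biUnion (sphereF r)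

theorem wlen_eq_norm (x : FreeGroup (Fin r)) : wlen x = FreeGroup.norm x := rfl

theorem wlen_mk_le (w : List (Fin r × Bool)) : wlen (FreeGroup.mk w) ≤ w.length :=
  FreeGroup.norm_mk_le

theorem wlen_mk_of_isRed {w : List (Fin r × Bool)} (h : IsRed w) :
    wlen (FreeGroup.mk w) = w.length := by
  unfold wlen
  rw [toWord_mk_of_isRed h]

theorem mem_sphereF {x : FreeGroup (Fin r)} {s : ℕ} :
    x ∈ sphereF r s ↔ wlen x = s := by
  constructor
  · intro hx
    obtain ⟨w, hw, rfl⟩ := Finset.mem_image.mp hx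
    obtain ⟨hlen, hred, -⟩ := mem_WF.mp hw
    rw [wlen_mk_of_isRed hred, hlen]
  · intro hx
    refine Finset.mem_image.mpr ⟨x.toWord, ?_, FreeGroup.mk_toWord⟩
    exact mem_WF.mpr ⟨hx, isRed_toWord x, by simp⟩

theorem mem_ballF {x : FreeGroup (Fin r)} {N : ℕ} :
    x ∈ ballF r N ↔ wlen x ≤ N := by
  simp only [ballF, Finset.mem_biUnion, Finset.mem_range, mem_sphereF]
  constructor
  · rintro ⟨ℓ, hℓ, rfl⟩; omega
  · intro h; exact ⟨wlen x, by omega, rfl⟩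

theorem card_sphereF (s : ℕ) :
    (sphereF r s).card = (WF r none s).card := by
  refine Finset.card_image_of_injOn ?_
  intro w hw w' hw' h
  have h1 := (mem_WF.mp hw).2.1
  have h2 := (mem_WF.mp hw').2.1
  rw [← toWord_mk_of_isRed h1, ← toWord_mk_of_isRed h2, h]

theorem card_sphereF_succ (s : ℕ) :
    (sphereF r (s+1)).card = 2 * r * (2 * r - 1) ^ s := by
  rw [card_sphereF, card_WF_none]

theorem card_sphereF_zero : (sphereF r 0).card = 1 := by
  rw [card_sphereF]
  simp [WF]

theorem card_ballF_le (hr : 2 ≤ r) {N : ℕ} (hN : 1 ≤ N) :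
    2 * (ballF r N).card ≤ 3 * (2 * r) * (2 * r - 1) ^ (N - 1) := by
  induction N with
  | zero => omega
  | succ N ih =>
    have hsplit : (ballF r (N+1)).card ≤ (ballF r N).card + (sphereF r (N+1)).card := by
      have : ballF r (N+1) ⊆ ballF r N ∪ sphereF r (N+1) := by
        intro x hx
        rw [mem_ballF] at hx
        rcases Nat.lt_or_ge (wlen x) (N+1) with h | h
        · exact Finset.mem_union_left _ (mem_ballF.mpr (by omega))
        · exact Finset.mem_union_right _ (mem_sphereF.mpr (by omega))
      calc (ballF r (N+1)).card ≤ (ballF r N ∪ sphereF r (N+1)).card :=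
            Finset.card_le_card this
        _ ≤ _ := Finset.card_union_le _ _
    rcases Nat.eq_zero_or_pos N with rfl | hNpos
    · have hz : (0:ℕ) + 1 = 1 := rfl
      rw [hz] at hsplit ⊢
      have hb0 : (ballF r 0).card ≤ 1 := by
        have : ballF r 0 ⊆ sphereF r 0 := by
          intro x hx
          rw [mem_ballF] at hx
          exact mem_sphereF.mpr (by omega)
        calc (ballF r 0).card ≤ (sphereF r 0).card := Finset.card_le_card this
          _ = 1 := card_sphereF_zero
      have hsp : (sphereF r 1).card = 2 * r := by
        have := card_sphereF_succ (r := r) 0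
        simpa using this
      have h1 : (ballF r 1).card ≤ 1 + 2 * r := by omega
      norm_num
      omega
    · have ih' := ih hNpos
      have hq3 : 3 ≤ 2 * r - 1 := by omega
      have hs := card_sphereF_succ (r := r) N
      have hNN : N - 1 + 1 = N := by omega
      have hpow : (2*r-1) ^ (N-1) * (2*r-1) = (2*r-1) ^ N := by
        rw [← pow_succ, hNN]
      -- 2*(ball N) ≤ 3*2r*(2*r-1)^(N-1), 2*sphere(N+1) = 2*2r*q^N
      -- target: 2*ball(N+1) ≤ 3*2r*q^N
      have key : 3 * (2*r) * (2*r-1)^(N-1) + 2 * (2 * r * (2*r-1)^N) ≤ 3 * (2*r) * (2*r-1)^N := by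
        have h1 : 3 * (2*r) * (2*r-1)^(N-1) ≤ (2*r) * (2*r-1)^N := by
          calc 3 * (2*r) * (2*r-1)^(N-1) ≤ (2*r-1) * ((2*r) * (2*r-1)^(N-1)) := by
                have := Nat.mul_le_mul_right ((2*r) * (2*r-1)^(N-1)) hq3
                nlinarith [this]
            _ = (2*r) * (2*r-1)^N := by
                rw [← hpow]; ring
        nlinarith
      simp only [Nat.add_sub_cancel]
      omega

/-! ### The key construction -/

theorem key_counting (hr : 1 ≤ r) (x : FreeGroup (Fin r)) (n t s u : ℕ)
    (hn : n = t + s) (hx : wlen x = t + u) :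
    ∃ Y : Finset (FreeGroup (Fin r)), Y.card = (2 * r - 1) ^ s ∧
      ∀ y ∈ Y, wlen y = n ∧ wlen (y⁻¹ * x) ≤ s + u := by
  classical
  set w := x.toWord with hw
  have hwred : IsRed w := isRed_toWord x
  have hwlen : w.length = t + u := hx
  set p := w.take t with hp
  set v := w.drop t with hv
  have hplen : p.length = t := by
    rw [hp, List.length_take]
    omega
  have hvlen : v.length = u := by
    rw [hv, List.length_drop]
    omega
  have hpred : IsRed p := hwred.take t
  set arb : Fin r × Bool := (⟨0, hr⟩, true) with harb
  set o : Option (Fin r × Bool) := some (p.getLastD arb) with ho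
  have hred_app : ∀ u' ∈ WF r o s, IsRed (p ++ u') := by
    intro u' hu'
    obtain ⟨hulen, hured, hhead⟩ := mem_WF.mp hu'
    refine List.isChain_append.mpr ⟨hpred, hured, ?_⟩
    intro a hag b hbh
    have hga : p.getLastD arb = a := by
      rw [List.getLastD_eq_getLast?, Option.mem_def.mp hag]
      rfl
    have := hhead (p.getLastD arb) rfl b hbh
    rw [hga] at this
    exact this
  refine ⟨(WF r o s).image (fun u' => FreeGroup.mk (p ++ u')), ?_, ?_⟩
  · rw [Finset.card_image_of_injOn ?_, ho, card_WF_some]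
    intro u1 h1 u2 h2 he
    have he' : FreeGroup.mk (p ++ u1) = FreeGroup.mk (p ++ u2) := he
    have e1 : (FreeGroup.mk (p ++ u1)).toWord = p ++ u1 := toWord_mk_of_isRed (hred_app u1 h1)
    have e2 : (FreeGroup.mk (p ++ u2)).toWord = p ++ u2 := toWord_mk_of_isRed (hred_app u2 h2)
    have : p ++ u1 = p ++ u2 := by rw [← e1, ← e2, he']
    exact List.append_cancel_left this
  · intro y hy
    obtain ⟨u', hu', rfl⟩ := Finset.mem_image.mp hy
    obtain ⟨hulen, hured, hhead⟩ := mem_WF.mp hu'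
    constructor
    · rw [wlen_mk_of_isRed (hred_app u' hu'), List.length_append, hplen, hulen, hn]
    · have hx2 : FreeGroup.mk p * FreeGroup.mk v = x := by
        rw [FreeGroup.mul_mk, List.take_append_drop]
        exact FreeGroup.mk_toWord
      have hy2 : FreeGroup.mk (p ++ u') = FreeGroup.mk p * FreeGroup.mk u' :=
        (FreeGroup.mul_mk).symm
      have : (FreeGroup.mk (p ++ u'))⁻¹ * x
          = FreeGroup.mk (FreeGroup.invRev u' ++ v) := by
        rw [hy2, ← hx2, ← FreeGroup.mul_mk, ← FreeGroup.inv_mk]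
        group
      rw [this]
      calc wlen (FreeGroup.mk (FreeGroup.invRev u' ++ v))
          ≤ (FreeGroup.invRev u' ++ v).length := wlen_mk_le _
        _ = s + u := by
            rw [List.length_append, FreeGroup.invRev_length, hulen, hvlen]

/-! ### Step A: convolution lower bound -/

theorem conv_lower (hr : 2 ≤ r) (a : ℕ → ℝ) (K N ℓ : ℕ) (hN : N = 2*K+2)
    (hl1 : N ≤ ℓ + K) (hl2 : ℓ ≤ N) (x : FreeGroup (Fin r)) (hx : wlen x = ℓ) :
    ∑ n ∈ (Finset.range (K+1)).filter (fun n => (n+ℓ+N) % 2 = 0 ∧ N ≤ n + ℓ),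
        ENNReal.ofReal (a n) * ((2*r-1 : ℕ) : ℝ≥0∞) ^ ((n + N - ℓ)/2)
      ≤ conv (fun y => ENNReal.ofReal (a (wlen y))) (finInd (ballF r N)) x := by
  classical
  set T := (Finset.range (K+1)).filter (fun n => (n+ℓ+N) % 2 = 0 ∧ N ≤ n + ℓ) with hT
  have hex : ∀ n ∈ T, ∃ Y : Finset (FreeGroup (Fin r)),
      Y.card = (2*r-1) ^ ((n + N - ℓ)/2) ∧
      ∀ y ∈ Y, wlen y = n ∧ wlen (y⁻¹ * x) ≤ N := by
    intro n hn
    rw [hT, Finset.mem_filter, Finset.mem_range] at hn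
    obtain ⟨hnK, hpar, hnl⟩ := hn
    obtain ⟨Y, hY1, hY2⟩ := key_counting (by omega) x n ((n+ℓ-N)/2) ((n+N-ℓ)/2)
      (ℓ - (n+ℓ-N)/2) (by omega) (by omega)
    refine ⟨Y, hY1, fun y hy => ⟨(hY2 y hy).1, ?_⟩⟩
    have := (hY2 y hy).2
    have he : (n+N-ℓ)/2 + (ℓ - (n+ℓ-N)/2) = N := by omega
    omega
  choose Y hY1 hY2 using hex
  set B : Finset (FreeGroup (Fin r)) := T.attach.biUnion (fun n => Y n.1 n.2) with hB
  have hdisj : ∀ n ∈ T.attach, ∀ m ∈ T.attach, n ≠ m →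
      Disjoint (Y n.1 n.2) (Y m.1 m.2) := by
    intro n _ m _ hnm
    rw [Finset.disjoint_left]
    intro y hy hy'
    have h1 := (hY2 n.1 n.2 y hy).1
    have h2 := (hY2 m.1 m.2 y hy').1
    exact hnm (Subtype.ext (h1 ▸ h2 ▸ rfl))
  calc ∑ n ∈ T, ENNReal.ofReal (a n) * ((2*r-1 : ℕ) : ℝ≥0∞) ^ ((n + N - ℓ)/2)
      = ∑ n ∈ T.attach,
          ENNReal.ofReal (a n.1) * ((2*r-1 : ℕ) : ℝ≥0∞) ^ ((n.1 + N - ℓ)/2) :=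
        (Finset.sum_attach _ _).symm
    _ = ∑ n ∈ T.attach, ∑ y ∈ Y n.1 n.2,
          (fun y => ENNReal.ofReal (a (wlen y))) y * finInd (ballF r N) (y⁻¹ * x) := by
        refine Finset.sum_congr rfl (fun n _ => ?_)
        have : ∀ y ∈ Y n.1 n.2,
            (fun y => ENNReal.ofReal (a (wlen y))) y * finInd (ballF r N) (y⁻¹ * x)
              = ENNReal.ofReal (a n.1) := by
          intro y hy
          obtain ⟨hw, hd⟩ := hY2 n.1 n.2 y hy
          simp only [hw, finInd, mem_ballF.mpr hd, if_pos, mul_one]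
        rw [Finset.sum_congr rfl this, Finset.sum_const, hY1, nsmul_eq_mul]
        rw [Nat.cast_pow, mul_comm]
    _ = ∑ y ∈ B, (fun y => ENNReal.ofReal (a (wlen y))) y * finInd (ballF r N) (y⁻¹ * x) := by
        rw [hB, Finset.sum_biUnion hdisj]
    _ ≤ conv (fun y => ENNReal.ofReal (a (wlen y))) (finInd (ballF r N)) x :=
        ENNReal.sum_le_tsum B

/-! ### Steps B–F: the partial bound over parity pairs -/

theorem partial_bound (hr : 2 ≤ r) (a : ℕ → ℝ) (C : ℝ)
    (hweak : ∀ E : Finset (FreeGroup (Fin r)), E.Nonempty →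
      ∑' x : FreeGroup (Fin r),
          (conv (fun y => ENNReal.ofReal (a (wlen y))) (finInd E) x) ^ 2
        ≤ ENNReal.ofReal C * (E.card : ℝ≥0∞)) (K : ℕ) :
    ∑ p ∈ (Finset.range (K+1) ×ˢ Finset.range (K+1)).filter (fun p => p.1 % 2 = p.2 % 2),
        ((1 + min p.1 p.2 : ℕ) : ℝ≥0∞) *
          (ENNReal.ofReal (a p.1) * ENNReal.ofReal (a p.2) *
            ((2*r-1:ℕ) : ℝ≥0∞) ^ ((p.1 + p.2)/2))
      ≤ 3 * ENNReal.ofReal C := by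
  classical
  set N : ℕ := 2*K+2 with hNdef
  set L : Finset ℕ := Finset.Icc (N-K) N with hLdef
  set T : ℕ → Finset ℕ :=
    fun ℓ => (Finset.range (K+1)).filter (fun n => (n+ℓ+N) % 2 = 0 ∧ N ≤ n + ℓ) with hTdef
  set g : ℕ → ℕ → ℝ≥0∞ := fun n m =>
    ENNReal.ofReal (a n) * ENNReal.ofReal (a m) * ((2*r-1:ℕ) : ℝ≥0∞) ^ ((n+m)/2) with hgdef
  set D : ℝ≥0∞ := ((2*r : ℕ) : ℝ≥0∞) * ((2*r-1:ℕ) : ℝ≥0∞) ^ (N-1) with hDdef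
  set f : FreeGroup (Fin r) → ℝ≥0∞ := fun y => ENNReal.ofReal (a (wlen y)) with hfdef
  set Sl : ℕ → ℝ≥0∞ := fun ℓ =>
    ∑ n ∈ T ℓ, ENNReal.ofReal (a n) * ((2*r-1:ℕ) : ℝ≥0∞) ^ ((n + N - ℓ)/2) with hSldef
  -- Step B1 : spheres lower bound of the tsum
  have hB1 : ∑ ℓ ∈ L, ((sphereF r ℓ).card : ℝ≥0∞) * (Sl ℓ)^2
      ≤ ∑' x : FreeGroup (Fin r), (conv f (finInd (ballF r N)) x) ^ 2 := by
    have hdisj : ∀ ℓ₁ ∈ L, ∀ ℓ₂ ∈ L, ℓ₁ ≠ ℓ₂ → Disjoint (sphereF r ℓ₁) (sphereF r ℓ₂) := by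
      intro ℓ₁ _ ℓ₂ _ h12
      rw [Finset.disjoint_left]
      intro x h1 h2
      rw [mem_sphereF] at h1 h2
      exact h12 (h1 ▸ h2 ▸ rfl)
    calc ∑ ℓ ∈ L, ((sphereF r ℓ).card : ℝ≥0∞) * (Sl ℓ)^2
        ≤ ∑ ℓ ∈ L, ∑ x ∈ sphereF r ℓ, (conv f (finInd (ballF r N)) x) ^ 2 := by
          refine Finset.sum_le_sum (fun ℓ hℓ => ?_)
          rw [hLdef, Finset.mem_Icc] at hℓ
          have hconvge : ∀ x ∈ sphereF r ℓ, (Sl ℓ)^2 ≤ (conv f (finInd (ballF r N)) x) ^ 2 := by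
            intro x hx
            have hwx : wlen x = ℓ := mem_sphereF.mp hx
            have h := conv_lower hr a K N ℓ hNdef (by omega) (by omega) x hwx
            rw [hSldef]
            simp only [hTdef, hfdef]
            exact pow_le_pow_left' h 2
          calc ((sphereF r ℓ).card : ℝ≥0∞) * (Sl ℓ)^2
              = (sphereF r ℓ).card • ((Sl ℓ)^2) := by rw [nsmul_eq_mul]
            _ ≤ ∑ x ∈ sphereF r ℓ, (conv f (finInd (ballF r N)) x) ^ 2 :=
              Finset.card_nsmul_le_sum _ _ _ hconvge
      _ = ∑ x ∈ L.biUnion (sphereF r), (conv f (finInd (ballF r N)) x) ^ 2 :=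
          (Finset.sum_biUnion hdisj).symm
      _ ≤ _ := ENNReal.sum_le_tsum _
  -- Step B2 : the weak-type hypothesis
  have hB2 : ∑' x : FreeGroup (Fin r), (conv f (finInd (ballF r N)) x) ^ 2
      ≤ ENNReal.ofReal C * ((3 * r * (2*r-1)^(N-1) : ℕ) : ℝ≥0∞) := by
    have hne : (ballF r N).Nonempty :=
      ⟨1, mem_ballF.mpr (by simp [wlen, FreeGroup.toWord_one])⟩
    refine (hweak (ballF r N) hne).trans ?_
    refine mul_le_mul_right ?_ _
    have hcard := card_ballF_le hr (N := N) (by omega)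
    have h6 : 3 * (2*r) * (2*r-1)^(N-1) = 2 * (3*r*(2*r-1)^(N-1)) := by ring
    rw [h6] at hcard
    have : (ballF r N).card ≤ 3*r*(2*r-1)^(N-1) :=
      Nat.le_of_mul_le_mul_left hcard (by omega)
    exact_mod_cast Nat.cast_le.mpr this
  -- Step C : rewrite each sphere term
  have hC : ∀ ℓ ∈ L, ((sphereF r ℓ).card : ℝ≥0∞) * (Sl ℓ)^2
      = ∑ n ∈ T ℓ, ∑ m ∈ T ℓ, D * g n m := by
    intro ℓ hℓ
    rw [hLdef, Finset.mem_Icc] at hℓ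
    have hl1 : 1 ≤ ℓ := by omega
    have hcard : (sphereF r ℓ).card = 2*r * (2*r-1)^(ℓ-1) := by
      have := card_sphereF_succ (r := r) (ℓ-1)
      rw [show ℓ-1+1 = ℓ by omega] at this
      exact this
    rw [hcard, pow_two, hSldef, Finset.sum_mul_sum]
    rw [Finset.mul_sum]
    refine Finset.sum_congr rfl (fun n hn => ?_)
    rw [Finset.mul_sum]
    refine Finset.sum_congr rfl (fun m hm => ?_)
    rw [hTdef, Finset.mem_filter, Finset.mem_range] at hn hm
    obtain ⟨hnK, hnpar, hnl⟩ := hn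
    obtain ⟨hmK, hmpar, hml⟩ := hm
    have hexp : (ℓ-1) + ((n + N - ℓ)/2 + (m + N - ℓ)/2) = (N-1) + (n+m)/2 := by omega
    rw [hDdef, hgdef]
    rw [Nat.cast_mul, Nat.cast_pow]
    calc (((2*r:ℕ):ℝ≥0∞) * ((2*r-1:ℕ) : ℝ≥0∞)^(ℓ-1)) *
          ((ENNReal.ofReal (a n) * ((2*r-1:ℕ) : ℝ≥0∞) ^ ((n + N - ℓ)/2)) *
           (ENNReal.ofReal (a m) * ((2*r-1:ℕ) : ℝ≥0∞) ^ ((m + N - ℓ)/2)))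
        = (((2*r:ℕ):ℝ≥0∞) * (ENNReal.ofReal (a n) * ENNReal.ofReal (a m))) *
            ((2*r-1:ℕ) : ℝ≥0∞)^((ℓ-1) + ((n + N - ℓ)/2 + (m + N - ℓ)/2)) := by
          rw [pow_add, pow_add]
          ring
      _ = (((2*r:ℕ):ℝ≥0∞) * (ENNReal.ofReal (a n) * ENNReal.ofReal (a m))) *
            ((2*r-1:ℕ) : ℝ≥0∞)^((N-1) + (n+m)/2) := by rw [hexp]
      _ = ((2*r:ℕ):ℝ≥0∞) * ((2*r-1:ℕ) : ℝ≥0∞)^(N-1) *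
            (ENNReal.ofReal (a n) * ENNReal.ofReal (a m) * ((2*r-1:ℕ) : ℝ≥0∞)^((n+m)/2)) := by
          rw [pow_add]
          ring
  -- Step D : swap the sums
  have hD : ∑ ℓ ∈ L, ∑ n ∈ T ℓ, ∑ m ∈ T ℓ, D * g n m
      = ∑ n ∈ Finset.range (K+1), ∑ m ∈ Finset.range (K+1),
          ((L.filter (fun ℓ => ((n+ℓ+N) % 2 = 0 ∧ N ≤ n + ℓ) ∧ ((m+ℓ+N) % 2 = 0 ∧ N ≤ m + ℓ))).card) • (D * g n m) := by
    have h1 : ∀ ℓ, ∑ n ∈ T ℓ, ∑ m ∈ T ℓ, D * g n m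
        = ∑ n ∈ Finset.range (K+1), ∑ m ∈ Finset.range (K+1),
            (if ((n+ℓ+N) % 2 = 0 ∧ N ≤ n + ℓ) ∧ ((m+ℓ+N) % 2 = 0 ∧ N ≤ m + ℓ) then D * g n m else 0) := by
      intro ℓ
      rw [hTdef, Finset.sum_filter]
      refine Finset.sum_congr rfl (fun n _ => ?_)
      by_cases hc : (n+ℓ+N) % 2 = 0 ∧ N ≤ n + ℓ
      · simp [hc, Finset.sum_filter]
      · simp [hc]
    rw [Finset.sum_congr rfl (fun ℓ _ => h1 ℓ), Finset.sum_comm]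
    refine Finset.sum_congr rfl (fun n _ => ?_)
    rw [Finset.sum_comm]
    refine Finset.sum_congr rfl (fun m _ => ?_)
    rw [← Finset.sum_filter, Finset.sum_const]
  -- Step: counting the ℓ's
  have hcnt : ∀ n m : ℕ, n ≤ K → m ≤ K → n % 2 = m % 2 →
      min n m / 2 + 1 ≤ (L.filter (fun ℓ => ((n+ℓ+N) % 2 = 0 ∧ N ≤ n + ℓ) ∧ ((m+ℓ+N) % 2 = 0 ∧ N ≤ m + ℓ))).card := by
    intro n m hn hm hpar
    have : (Finset.range (min n m / 2 + 1)).card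
        ≤ (L.filter (fun ℓ => ((n+ℓ+N) % 2 = 0 ∧ N ≤ n + ℓ) ∧ ((m+ℓ+N) % 2 = 0 ∧ N ≤ m + ℓ))).card := by
      refine Finset.card_le_card_of_injOn (fun j => N - min n m + 2*j) ?_ ?_
      · intro j hj
        rw [Finset.mem_coe, Finset.mem_range] at hj
        show N - min n m + 2*j ∈ _
        rw [Finset.mem_coe, Finset.mem_filter, hLdef, Finset.mem_Icc]
        omega
      · intro j1 _ j2 _ he
        have he' : N - min n m + 2*j1 = N - min n m + 2*j2 := he
        omega
    simpa using this
  -- Put B1, B2, C, D together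
  have hmain : ∑ n ∈ Finset.range (K+1), ∑ m ∈ Finset.range (K+1),
      ((L.filter (fun ℓ => ((n+ℓ+N) % 2 = 0 ∧ N ≤ n + ℓ) ∧ ((m+ℓ+N) % 2 = 0 ∧ N ≤ m + ℓ))).card) • (D * g n m)
      ≤ ENNReal.ofReal C * ((3 * r * (2*r-1)^(N-1) : ℕ) : ℝ≥0∞) := by
    rw [← hD, ← Finset.sum_congr rfl hC]
    exact hB1.trans hB2
  -- Restrict to parity pairs and replace count by min/2+1
  set P := (Finset.range (K+1) ×ˢ Finset.range (K+1)).filter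
      (fun p : ℕ × ℕ => p.1 % 2 = p.2 % 2) with hPdef
  have hstep : ∑ p ∈ P, ((min p.1 p.2 / 2 + 1 : ℕ) : ℝ≥0∞) * (D * g p.1 p.2)
      ≤ ENNReal.ofReal C * ((3 * r * (2*r-1)^(N-1) : ℕ) : ℝ≥0∞) := by
    calc ∑ p ∈ P, ((min p.1 p.2 / 2 + 1 : ℕ) : ℝ≥0∞) * (D * g p.1 p.2)
        ≤ ∑ p ∈ P, ((L.filter (fun ℓ => ((p.1+ℓ+N) % 2 = 0 ∧ N ≤ p.1 + ℓ) ∧ ((p.2+ℓ+N) % 2 = 0 ∧ N ≤ p.2 + ℓ))).card) • (D * g p.1 p.2) := by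
          refine Finset.sum_le_sum (fun p hp => ?_)
          have hp' : p.1 ≤ K ∧ p.2 ≤ K ∧ p.1 % 2 = p.2 % 2 := by
            simp only [hPdef, Finset.mem_filter, Finset.mem_product, Finset.mem_range] at hp
            omega
          rw [nsmul_eq_mul]
          exact mul_le_mul_left (Nat.cast_le.mpr
            (hcnt p.1 p.2 hp'.1 hp'.2.1 hp'.2.2)) _
      _ ≤ ∑ p ∈ Finset.range (K+1) ×ˢ Finset.range (K+1),
            ((L.filter (fun ℓ => ((p.1+ℓ+N) % 2 = 0 ∧ N ≤ p.1 + ℓ) ∧ ((p.2+ℓ+N) % 2 = 0 ∧ N ≤ p.2 + ℓ))).card) • (D * g p.1 p.2) :=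
          Finset.sum_le_sum_of_subset (Finset.filter_subset _ _)
      _ = ∑ n ∈ Finset.range (K+1), ∑ m ∈ Finset.range (K+1),
            ((L.filter (fun ℓ => ((n+ℓ+N) % 2 = 0 ∧ N ≤ n + ℓ) ∧ ((m+ℓ+N) % 2 = 0 ∧ N ≤ m + ℓ))).card) • (D * g n m) :=
          Finset.sum_product' (s := Finset.range (K+1)) (t := Finset.range (K+1))
            (f := fun n m => ((L.filter (fun ℓ => ((n+ℓ+N) % 2 = 0 ∧ N ≤ n + ℓ) ∧
              ((m+ℓ+N) % 2 = 0 ∧ N ≤ m + ℓ))).card) • (D * g n m))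
      _ ≤ _ := hmain
  -- Final cancellation
  have hD0 : D ≠ 0 := by
    rw [hDdef]
    refine mul_ne_zero ?_ (pow_ne_zero _ ?_)
    · exact Nat.cast_ne_zero.mpr (by omega)
    · exact Nat.cast_ne_zero.mpr (by omega)
  have hDtop : D ≠ ∞ := by
    rw [hDdef]
    exact ENNReal.mul_ne_top (ENNReal.natCast_ne_top _)
      (ENNReal.pow_ne_top (ENNReal.natCast_ne_top _))
  have h2 : D * (∑ p ∈ P, ((1 + min p.1 p.2 : ℕ) : ℝ≥0∞) * g p.1 p.2)
      ≤ D * (3 * ENNReal.ofReal C) := by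
    calc D * (∑ p ∈ P, ((1 + min p.1 p.2 : ℕ) : ℝ≥0∞) * g p.1 p.2)
        = ∑ p ∈ P, D * (((1 + min p.1 p.2 : ℕ) : ℝ≥0∞) * g p.1 p.2) := Finset.mul_sum _ _ _
      _ ≤ ∑ p ∈ P, ((2 * (min p.1 p.2 / 2 + 1) : ℕ) : ℝ≥0∞) * (D * g p.1 p.2) := by
          refine Finset.sum_le_sum (fun p _ => ?_)
          have hle : ((1 + min p.1 p.2 : ℕ) : ℝ≥0∞)
              ≤ ((2 * (min p.1 p.2 / 2 + 1) : ℕ) : ℝ≥0∞) := Nat.cast_le.mpr (by omega)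
          calc D * (((1 + min p.1 p.2 : ℕ) : ℝ≥0∞) * g p.1 p.2)
              = ((1 + min p.1 p.2 : ℕ) : ℝ≥0∞) * (D * g p.1 p.2) := by ring
            _ ≤ _ := mul_le_mul_left hle _
      _ = 2 * ∑ p ∈ P, ((min p.1 p.2 / 2 + 1 : ℕ) : ℝ≥0∞) * (D * g p.1 p.2) := by
          rw [Finset.mul_sum]
          refine Finset.sum_congr rfl (fun p _ => ?_)
          push_cast
          ring
      _ ≤ 2 * (ENNReal.ofReal C * ((3 * r * (2*r-1)^(N-1) : ℕ) : ℝ≥0∞)) :=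
          mul_le_mul_right hstep _
      _ = D * (3 * ENNReal.ofReal C) := by
          rw [hDdef]
          push_cast
          ring
  have h3 := (ENNReal.mul_le_mul_iff_right hD0 hDtop).mp h2
  calc ∑ p ∈ P, ((1 + min p.1 p.2 : ℕ) : ℝ≥0∞) *
        (ENNReal.ofReal (a p.1) * ENNReal.ofReal (a p.2) * ((2*r-1:ℕ) : ℝ≥0∞) ^ ((p.1 + p.2)/2))
      = ∑ p ∈ P, ((1 + min p.1 p.2 : ℕ) : ℝ≥0∞) * g p.1 p.2 := by
        refine Finset.sum_congr rfl (fun p _ => ?_)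
        rw [hgdef]
    _ ≤ 3 * ENNReal.ofReal C := h3

/-! ### Step G : parity doubling -/

theorem amgm (x y : ℝ≥0∞) : x*y + y*x ≤ x*x + y*y := by
  rcases le_total x y with h | h
  · obtain ⟨c, rfl⟩ := exists_add_of_le h
    calc x*(x+c) + (x+c)*x = x*x + x*x + (x*c + c*x) := by ring
      _ ≤ x*x + x*x + (x*c + c*x) + c*c := le_self_add
      _ = x*x + (x+c)*(x+c) := by ring
  · obtain ⟨c, rfl⟩ := exists_add_of_le h
    calc (y+c)*y + y*(y+c) = y*y + y*y + (y*c + c*y) := by ring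
      _ ≤ y*y + y*y + (y*c + c*y) + c*c := le_self_add
      _ = (y+c)*(y+c) + y*y := by ring

theorem parity_double (B : ℕ → ℝ≥0∞) (K : ℕ) :
    ∑ p ∈ Finset.range (K+1) ×ˢ Finset.range (K+1),
        ((1 + min p.1 p.2 : ℕ) : ℝ≥0∞) * (B p.1 * B p.2)
      ≤ 2 * ∑ p ∈ (Finset.range (K+1) ×ˢ Finset.range (K+1)).filter
            (fun p => p.1 % 2 = p.2 % 2),
          ((1 + min p.1 p.2 : ℕ) : ℝ≥0∞) * (B p.1 * B p.2) := by
  classical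
  set R := Finset.range (K+1) with hRdef
  set We : ℕ → ℝ≥0∞ := fun j => ∑ n ∈ R, (if j ≤ n ∧ n % 2 = 0 then B n else 0) with hWe
  set Wo : ℕ → ℝ≥0∞ := fun j => ∑ n ∈ R, (if j ≤ n ∧ n % 2 = 1 then B n else 0) with hWo
  -- the counting identity for the min-factor
  have hmin : ∀ p ∈ R ×ˢ R, ((1 + min p.1 p.2 : ℕ) : ℝ≥0∞)
      = ∑ j ∈ R, (if j ≤ p.1 ∧ j ≤ p.2 then (1:ℝ≥0∞) else 0) := by
    intro p hp
    rw [Finset.mem_product, hRdef, Finset.mem_range, Finset.mem_range] at hp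
    rw [Finset.sum_boole]
    congr 1
    have : R.filter (fun j => j ≤ p.1 ∧ j ≤ p.2) = Finset.range (min p.1 p.2 + 1) := by
      ext j
      simp only [hRdef, Finset.mem_filter, Finset.mem_range]
      omega
    rw [this, Finset.card_range]
    omega
  -- identity 1 : LHS as a sum of squares
  have hid1 : ∑ p ∈ R ×ˢ R, ((1 + min p.1 p.2 : ℕ) : ℝ≥0∞) * (B p.1 * B p.2)
      = ∑ j ∈ R, (We j + Wo j) * (We j + Wo j) := by
    rw [Finset.sum_congr rfl (fun p hp => by rw [hmin p hp, Finset.sum_mul])]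
    rw [Finset.sum_comm]
    refine Finset.sum_congr rfl (fun j _ => ?_)
    have hpt : ∀ p : ℕ × ℕ, (if j ≤ p.1 ∧ j ≤ p.2 then (1:ℝ≥0∞) else 0) * (B p.1 * B p.2)
        = ((if j ≤ p.1 then B p.1 else 0) * (if j ≤ p.2 then B p.2 else 0)) := by
      intro p
      by_cases h1 : j ≤ p.1 <;> by_cases h2 : j ≤ p.2 <;> simp [h1, h2]
    rw [Finset.sum_congr rfl (fun p _ => hpt p)]
    rw [Finset.sum_product' (f := fun n m => (if j ≤ n then B n else 0) * (if j ≤ m then B m else 0))]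
    have hsplit : ∀ n, (if j ≤ n then B n else 0)
        = (if j ≤ n ∧ n % 2 = 0 then B n else 0) + (if j ≤ n ∧ n % 2 = 1 then B n else 0) := by
      intro n
      rcases Nat.mod_two_eq_zero_or_one n with h | h <;> by_cases hj : j ≤ n <;>
        simp [h, hj]
    calc ∑ n ∈ R, ∑ m ∈ R, (if j ≤ n then B n else 0) * (if j ≤ m then B m else 0)
        = ∑ n ∈ R, (if j ≤ n then B n else 0) * ∑ m ∈ R, (if j ≤ m then B m else 0) := by
          refine Finset.sum_congr rfl (fun n _ => ?_)
          rw [Finset.mul_sum]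
      _ = (∑ n ∈ R, (if j ≤ n then B n else 0)) * ∑ m ∈ R, (if j ≤ m then B m else 0) := by
          rw [Finset.sum_mul]
      _ = (We j + Wo j) * (We j + Wo j) := by
          rw [Finset.sum_congr rfl (fun n _ => hsplit n), Finset.sum_add_distrib]
  -- identity 2 : parity-restricted sum as sums of same-parity squares
  have hid2 : ∑ p ∈ (R ×ˢ R).filter (fun p => p.1 % 2 = p.2 % 2),
        ((1 + min p.1 p.2 : ℕ) : ℝ≥0∞) * (B p.1 * B p.2)
      = ∑ j ∈ R, (We j * We j + Wo j * Wo j) := by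
    have hstep1 : ∑ p ∈ R ×ˢ R,
          (if p.1 % 2 = p.2 % 2 then ((1 + min p.1 p.2 : ℕ) : ℝ≥0∞) * (B p.1 * B p.2) else 0)
        = ∑ p ∈ R ×ˢ R, (if p.1 % 2 = p.2 % 2 then
            ∑ j ∈ R, (if j ≤ p.1 ∧ j ≤ p.2 then (1:ℝ≥0∞) else 0) * (B p.1 * B p.2) else 0) := by
      refine Finset.sum_congr rfl (fun p hp => ?_)
      by_cases hc : p.1 % 2 = p.2 % 2
      · simp only [hc, if_true]
        rw [hmin p hp, Finset.sum_mul]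
      · simp [hc]
    rw [Finset.sum_filter, hstep1]
    have hpt : ∀ p : ℕ × ℕ, (if p.1 % 2 = p.2 % 2 then
          ∑ j ∈ R, (if j ≤ p.1 ∧ j ≤ p.2 then (1:ℝ≥0∞) else 0) * (B p.1 * B p.2) else 0)
        = ∑ j ∈ R, (((if j ≤ p.1 ∧ p.1 % 2 = 0 then B p.1 else 0) *
              (if j ≤ p.2 ∧ p.2 % 2 = 0 then B p.2 else 0)) +
            ((if j ≤ p.1 ∧ p.1 % 2 = 1 then B p.1 else 0) *
              (if j ≤ p.2 ∧ p.2 % 2 = 1 then B p.2 else 0))) := by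
      intro p
      by_cases hc : p.1 % 2 = p.2 % 2
      · simp only [hc, if_true]
        refine Finset.sum_congr rfl (fun j _ => ?_)
        rcases Nat.mod_two_eq_zero_or_one p.1 with h1 | h1 <;>
          rcases Nat.mod_two_eq_zero_or_one p.2 with h2 | h2 <;>
          by_cases hj1 : j ≤ p.1 <;> by_cases hj2 : j ≤ p.2 <;>
          simp [h1, h2, hj1, hj2] <;> omega
      · simp only [hc, if_false]
        symm
        refine Finset.sum_eq_zero (fun j _ => ?_)
        rcases Nat.mod_two_eq_zero_or_one p.1 with h1 | h1 <;>
          rcases Nat.mod_two_eq_zero_or_one p.2 with h2 | h2 <;>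
          simp [h1, h2] <;> omega
    rw [Finset.sum_congr rfl (fun p _ => hpt p), Finset.sum_comm]
    refine Finset.sum_congr rfl (fun j _ => ?_)
    rw [Finset.sum_add_distrib]
    congr 1
    · rw [Finset.sum_product' (f := fun n m => (if j ≤ n ∧ n % 2 = 0 then B n else 0) *
        (if j ≤ m ∧ m % 2 = 0 then B m else 0))]
      calc ∑ n ∈ R, ∑ m ∈ R, _ = ∑ n ∈ R, (if j ≤ n ∧ n % 2 = 0 then B n else 0) *
            ∑ m ∈ R, (if j ≤ m ∧ m % 2 = 0 then B m else 0) := by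
            refine Finset.sum_congr rfl (fun n _ => ?_)
            rw [Finset.mul_sum]
        _ = We j * We j := by rw [Finset.sum_mul]
    · rw [Finset.sum_product' (f := fun n m => (if j ≤ n ∧ n % 2 = 1 then B n else 0) *
        (if j ≤ m ∧ m % 2 = 1 then B m else 0))]
      calc ∑ n ∈ R, ∑ m ∈ R, _ = ∑ n ∈ R, (if j ≤ n ∧ n % 2 = 1 then B n else 0) *
            ∑ m ∈ R, (if j ≤ m ∧ m % 2 = 1 then B m else 0) := by
            refine Finset.sum_congr rfl (fun n _ => ?_)
            rw [Finset.mul_sum]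
        _ = Wo j * Wo j := by rw [Finset.sum_mul]
  rw [hid1, hid2, Finset.mul_sum]
  refine Finset.sum_le_sum (fun j _ => ?_)
  calc (We j + Wo j) * (We j + Wo j)
      = (We j * We j + Wo j * Wo j) + (We j * Wo j + Wo j * We j) := by ring
    _ ≤ (We j * We j + Wo j * Wo j) + (We j * We j + Wo j * Wo j) :=
        add_le_add_right (amgm _ _) _
    _ = 2 * (We j * We j + Wo j * Wo j) := by ring

end RadialAux

open RadialAux in
/-- If `Σ_x ((f∗χ_E)(x))² ≤ C |E|` for every finite nonempty `E`, for the radial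
function `f = Σ_n f_n χ_n` with nonnegative coefficients, then
`A(f) = Σ_{n,m} f_n f_m q^{(n+m)/2} (1 + min(n,m))` is finite and `A(f) ≤ 6 C`. -/
theorem radial_weak_type_two_two_lower
    (r : ℕ) (hr : 2 ≤ r) (q : ℕ) (hq : q = 2 * r - 1)
    (a : ℕ → ℝ) (ha : ∀ n, 0 ≤ a n)
    (C : ℝ)
    (hweak : ∀ E : Finset (FreeGroup (Fin r)), E.Nonempty →
      ∑' x : FreeGroup (Fin r),
          (conv (fun y => ENNReal.ofReal (a (wlen y))) (finInd E) x) ^ 2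
        ≤ ENNReal.ofReal C * (E.card : ℝ≥0∞))
    (A : ℝ≥0∞)
    (hA : A = ∑' p : ℕ × ℕ,
        ENNReal.ofReal (a p.1) * ENNReal.ofReal (a p.2) *
          (q : ℝ≥0∞) ^ ((((p.1 : ℝ) + (p.2 : ℝ))) / 2) *
          ((1 + min p.1 p.2 : ℕ) : ℝ≥0∞)) :
    A ≠ ∞ ∧ A ≤ 6 * ENNReal.ofReal C := by
  classical
  subst hq
  have hq0 : ((2*r-1 : ℕ) : ℝ≥0∞) ≠ 0 := Nat.cast_ne_zero.mpr (by omega)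
  have hqt : ((2*r-1 : ℕ) : ℝ≥0∞) ≠ ∞ := ENNReal.natCast_ne_top _
  set Bc : ℕ → ℝ≥0∞ :=
    fun n => ENNReal.ofReal (a n) * ((2*r-1:ℕ) : ℝ≥0∞) ^ ((n:ℝ)/2) with hBc
  have hsummand : ∀ p : ℕ × ℕ,
      ENNReal.ofReal (a p.1) * ENNReal.ofReal (a p.2) *
        ((2*r-1:ℕ) : ℝ≥0∞) ^ ((((p.1:ℝ) + (p.2:ℝ))) / 2) * ((1 + min p.1 p.2 : ℕ) : ℝ≥0∞)
      = ((1 + min p.1 p.2 : ℕ) : ℝ≥0∞) * (Bc p.1 * Bc p.2) := by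
    intro p
    have hsplit : ((2*r-1:ℕ) : ℝ≥0∞) ^ ((((p.1:ℝ) + (p.2:ℝ))) / 2)
        = ((2*r-1:ℕ) : ℝ≥0∞) ^ ((p.1:ℝ)/2) * ((2*r-1:ℕ) : ℝ≥0∞) ^ ((p.2:ℝ)/2) := by
      rw [← ENNReal.rpow_add _ _ hq0 hqt]
      ring_nf
    rw [hBc, hsplit]
    ring
  have hparityterm : ∀ p : ℕ × ℕ, p.1 % 2 = p.2 % 2 →
      ((1 + min p.1 p.2 : ℕ) : ℝ≥0∞) * (Bc p.1 * Bc p.2)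
      = ((1 + min p.1 p.2 : ℕ) : ℝ≥0∞) *
          (ENNReal.ofReal (a p.1) * ENNReal.ofReal (a p.2) *
            ((2*r-1:ℕ) : ℝ≥0∞) ^ ((p.1 + p.2)/2)) := by
    intro p hp
    have hcast : ((p.1:ℝ)/2 + (p.2:ℝ)/2) = (((p.1 + p.2)/2 : ℕ) : ℝ) := by
      have h2 : ((p.1 + p.2)/2 : ℕ) * 2 = p.1 + p.2 := by omega
      have := congrArg (fun k : ℕ => (k : ℝ)) h2
      push_cast at this
      linarith
    have : Bc p.1 * Bc p.2 = ENNReal.ofReal (a p.1) * ENNReal.ofReal (a p.2) *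
        ((2*r-1:ℕ) : ℝ≥0∞) ^ ((p.1 + p.2)/2) := by
      rw [hBc]
      calc ENNReal.ofReal (a p.1) * ((2*r-1:ℕ) : ℝ≥0∞) ^ ((p.1:ℝ)/2) *
            (ENNReal.ofReal (a p.2) * ((2*r-1:ℕ) : ℝ≥0∞) ^ ((p.2:ℝ)/2))
          = ENNReal.ofReal (a p.1) * ENNReal.ofReal (a p.2) *
            (((2*r-1:ℕ) : ℝ≥0∞) ^ ((p.1:ℝ)/2) * ((2*r-1:ℕ) : ℝ≥0∞) ^ ((p.2:ℝ)/2)) := by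
            ring
        _ = ENNReal.ofReal (a p.1) * ENNReal.ofReal (a p.2) *
            ((2*r-1:ℕ) : ℝ≥0∞) ^ ((p.1:ℝ)/2 + (p.2:ℝ)/2) := by
            rw [← ENNReal.rpow_add _ _ hq0 hqt]
        _ = _ := by
            rw [hcast, ENNReal.rpow_natCast]
    rw [this]
  have hbound : ∀ s : Finset (ℕ × ℕ),
      ∑ p ∈ s, (ENNReal.ofReal (a p.1) * ENNReal.ofReal (a p.2) *
        ((2*r-1:ℕ) : ℝ≥0∞) ^ ((((p.1:ℝ) + (p.2:ℝ))) / 2) * ((1 + min p.1 p.2 : ℕ) : ℝ≥0∞))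
      ≤ 6 * ENNReal.ofReal C := by
    intro s
    set K := s.sup (fun p => max p.1 p.2) with hK
    have hsub : s ⊆ Finset.range (K+1) ×ˢ Finset.range (K+1) := by
      intro p hp
      have : max p.1 p.2 ≤ K := Finset.le_sup (f := fun p : ℕ × ℕ => max p.1 p.2) hp
      rw [Finset.mem_product, Finset.mem_range, Finset.mem_range]
      omega
    calc ∑ p ∈ s, (ENNReal.ofReal (a p.1) * ENNReal.ofReal (a p.2) *
          ((2*r-1:ℕ) : ℝ≥0∞) ^ ((((p.1:ℝ) + (p.2:ℝ))) / 2) * ((1 + min p.1 p.2 : ℕ) : ℝ≥0∞))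
        ≤ ∑ p ∈ Finset.range (K+1) ×ˢ Finset.range (K+1),
            (ENNReal.ofReal (a p.1) * ENNReal.ofReal (a p.2) *
            ((2*r-1:ℕ) : ℝ≥0∞) ^ ((((p.1:ℝ) + (p.2:ℝ))) / 2) *
              ((1 + min p.1 p.2 : ℕ) : ℝ≥0∞)) :=
          Finset.sum_le_sum_of_subset hsub
      _ = ∑ p ∈ Finset.range (K+1) ×ˢ Finset.range (K+1),
            ((1 + min p.1 p.2 : ℕ) : ℝ≥0∞) * (Bc p.1 * Bc p.2) :=
          Finset.sum_congr rfl (fun p _ => hsummand p)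
      _ ≤ 2 * ∑ p ∈ (Finset.range (K+1) ×ˢ Finset.range (K+1)).filter
            (fun p => p.1 % 2 = p.2 % 2),
            ((1 + min p.1 p.2 : ℕ) : ℝ≥0∞) * (Bc p.1 * Bc p.2) := parity_double Bc K
      _ = 2 * ∑ p ∈ (Finset.range (K+1) ×ˢ Finset.range (K+1)).filter
            (fun p => p.1 % 2 = p.2 % 2),
            ((1 + min p.1 p.2 : ℕ) : ℝ≥0∞) *
              (ENNReal.ofReal (a p.1) * ENNReal.ofReal (a p.2) *
                ((2*r-1:ℕ) : ℝ≥0∞) ^ ((p.1 + p.2)/2)) := by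
          congr 1
          refine Finset.sum_congr rfl (fun p hp => ?_)
          exact hparityterm p (Finset.mem_filter.mp hp).2
      _ ≤ 2 * (3 * ENNReal.ofReal C) :=
          mul_le_mul_right (partial_bound hr a C hweak K) _
      _ = 6 * ENNReal.ofReal C := by ring
  have hle : A ≤ 6 * ENNReal.ofReal C := by
    rw [hA]
    exact Summable.tsum_le_of_sum_le ENNReal.summable hbound
  refine ⟨?_, hle⟩
  exact ne_top_of_le_ne_top
    (ENNReal.mul_ne_top (by norm_num) ENNReal.ofReal_ne_top) hle
end
end

section
/- There exists a constant C > 0 (depending only on q; one may take C = 4) such that for every n ∈ ℕ and all finite subsets E, F′ ⊆ F, ⟨χ_n ∗ χ_E, χ_{F′}⟩ ≤ C · q^{n/2} · |E|^{1/2} · |F′|^{1/2}. (Equivalently, the convolution operator λ(χ_n) with the indicator of the sphere of radius n is of restricted weak type (2,2) with ‖λ(χ_n)‖_{(2,1)→(2,∞)} ≤ c q^{n/2}.) -/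
open scoped ENNReal

noncomputable section

/-- Indicator (ℝ≥0∞-valued) of the sphere of radius `n` in the free group. -/
def sphInd {α : Type*} [DecidableEq α] (n : ℕ) (x : FreeGroup α) : ℝ≥0∞ :=
  if wlen x = n then 1 else 0

set_option linter.unusedSectionVars false
set_option linter.unusedVariables false

open List FreeGroup

section WordAux
variable {α : Type*} [DecidableEq α]

variable {α : Type*} [DecidableEq α]

/-- adjacency condition for reduced words -/
def RR (a b : α × Bool) : Prop := ¬(b.1 = a.1 ∧ b.2 = !a.2)

lemma reduce_eq_self_of_chain : ∀ {L : List (α × Bool)}, List.Chain' (RR) L → FreeGroup.reduce L = L := by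
  intro L h
  induction L with
  | nil => rfl
  | cons x L ih =>
    have hL : FreeGroup.reduce L = L := ih h.tail
    rw [FreeGroup.reduce.cons, hL]
    cases L with
    | nil => rfl
    | cons hd tl =>
      have hr : RR x hd := List.isChain_cons_cons.mp h |>.1
      simp only [RR] at hr
      have : ¬ (x.1 = hd.1 ∧ x.2 = !hd.2) := by
        rintro ⟨h1, h2⟩
        exact hr ⟨h1.symm, by simp [h2]⟩
      simp [this]

lemma chain_of_reduce_eq_self : ∀ {L : List (α × Bool)}, FreeGroup.reduce L = L → List.Chain' RR L := by
  intro L h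
  induction L with
  | nil => exact List.isChain_nil
  | cons x L ih =>
    rw [FreeGroup.reduce.cons] at h
    rcases hL : FreeGroup.reduce L with _ | ⟨hd, tl⟩
    · rw [hL] at h
      have h' : [x] = x :: L := h
      have : L = [] := by injection h' with h1 h2; exact h2.symm
      subst this
      exact List.isChain_singleton x
    · rw [hL] at h
      by_cases hc : x.1 = hd.1 ∧ x.2 = !hd.2
      · exfalso
        have h' : (if x.1 = hd.1 ∧ x.2 = !hd.2 then tl else x :: hd :: tl) = x :: L := h
        rw [if_pos hc] at h'
        have h1 : (FreeGroup.reduce L).length ≤ L.length := (FreeGroup.reduce.red).length_le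
        have h2 : tl.length = (x :: L).length := by rw [h']
        rw [hL] at h1
        simp at h1 h2
        omega
      · have h' : (if x.1 = hd.1 ∧ x.2 = !hd.2 then tl else x :: hd :: tl) = x :: L := h
        rw [if_neg hc] at h'
        have hLtl : L = hd :: tl := by injection h' with h1 h2; exact h2.symm
        rw [hLtl]
        refine List.isChain_cons_cons.mpr ⟨?_, ?_⟩
        · rintro ⟨h1, h2⟩
          exact hc ⟨h1.symm, by simp [h2]⟩
        · exact hLtl ▸ ih (by rw [hL, hLtl])

lemma chain_toWord (x : FreeGroup α) : List.Chain' RR x.toWord :=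
  chain_of_reduce_eq_self (FreeGroup.reduce_toWord x)




lemma invRev_append' (L₁ L₂ : List (α × Bool)) :
    FreeGroup.invRev (L₁ ++ L₂) = FreeGroup.invRev L₂ ++ FreeGroup.invRev L₁ := by
  simp [FreeGroup.invRev]

lemma invRev_singleton (x : α × Bool) :
    FreeGroup.invRev [x] = [(x.1, !x.2)] := by simp [FreeGroup.invRev]

lemma chain_invRev {L : List (α × Bool)} (h : List.Chain' RR L) :
    List.Chain' RR (FreeGroup.invRev L) := by
  apply chain_of_reduce_eq_self
  rw [FreeGroup.reduce_invRev, reduce_eq_self_of_chain h]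

/-- Key cancellation lemma. -/
lemma cancel : ∀ (U V : List (α × Bool)), List.Chain' RR U → List.Chain' RR V →
    ∃ P S W : List (α × Bool), U = P ++ W ∧ V = S ++ W ∧
      FreeGroup.reduce (V ++ FreeGroup.invRev U) = S ++ FreeGroup.invRev P := by
  intro U
  induction U using List.reverseRecOn with
  | nil =>
    intro V _ hV
    exact ⟨[], V, [], by simp, by simp, by
      simp [FreeGroup.invRev, reduce_eq_self_of_chain hV]⟩
  | append_singleton U' x ih =>
    intro V hU hV
    rcases eq_or_ne V [] with rfl | hVne
    · refine ⟨U' ++ [x], [], [], by simp, by simp, ?_⟩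
      simp only [List.nil_append]
      rw [reduce_eq_self_of_chain (chain_invRev hU)]
    · -- V nonempty: V = V' ++ [y]
      obtain ⟨V', y, rfl⟩ : ∃ V' y, V = V' ++ [y] := V.eq_nil_or_concat'.resolve_left hVne
      by_cases hxy : y = x
      · subst hxy
        -- one cancellation step
        have hstep : FreeGroup.Red.Step (V' ++ [y] ++ FreeGroup.invRev (U' ++ [y]))
            (V' ++ FreeGroup.invRev U') := by
          rw [invRev_append', invRev_singleton]
          have : V' ++ [y] ++ ([(y.1, !y.2)] ++ FreeGroup.invRev U')
              = V' ++ (y.1, y.2) :: (y.1, !y.2) :: FreeGroup.invRev U' := by simp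
          rw [this]
          exact FreeGroup.Red.Step.not
        have hred : FreeGroup.reduce (V' ++ [y] ++ FreeGroup.invRev (U' ++ [y]))
            = FreeGroup.reduce (V' ++ FreeGroup.invRev U') := FreeGroup.reduce.Step.eq hstep
        obtain ⟨P, S, W, h1, h2, h3⟩ := ih V' (hU.prefix (List.prefix_append _ _))
          (hV.prefix (List.prefix_append _ _))
        exact ⟨P, S, W ++ [y], by rw [h1]; simp, by rw [h2]; simp, by rw [hred, h3]⟩
      · -- no cancellation: junction letters don't cancel
        refine ⟨U' ++ [x], V' ++ [y], [], by simp, by simp, ?_⟩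
        have hchain : List.Chain' RR ((V' ++ [y]) ++ FreeGroup.invRev (U' ++ [x])) := by
          apply List.IsChain.append hV (chain_invRev hU)
          intro a ha b hb
          rw [List.getLast?_concat] at ha
          rw [invRev_append', invRev_singleton] at hb
          simp only [List.singleton_append, List.head?_cons, Option.mem_some_iff] at ha hb
          subst ha; subst hb
          rintro ⟨h1, h2⟩
          apply hxy
          apply Prod.ext
          · exact h1.symm
          · simpa using h2.symm
        rw [reduce_eq_self_of_chain hchain]



lemma exists_split (u v : FreeGroup α) :
    ∃ i, i ≤ (v * u⁻¹).toWord.length ∧ i ≤ u.toWord.length ∧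
      (v * u⁻¹).toWord.length - i ≤ v.toWord.length ∧
      u.toWord.drop i = v.toWord.drop ((v * u⁻¹).toWord.length - i) := by
  obtain ⟨P, S, W, h1, h2, h3⟩ := cancel u.toWord v.toWord (chain_toWord u) (chain_toWord v)
  have hvu : (v * u⁻¹).toWord = S ++ FreeGroup.invRev P := by
    conv_lhs => rw [← FreeGroup.mk_toWord (x := v), ← FreeGroup.mk_toWord (x := u)]
    rw [FreeGroup.inv_mk, FreeGroup.mul_mk, FreeGroup.toWord_mk, h3]
  have hn : (v * u⁻¹).toWord.length = S.length + P.length := by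
    rw [hvu, List.length_append, FreeGroup.invRev_length]
  refine ⟨P.length, by omega, ?_, ?_, ?_⟩
  · rw [h1, List.length_append]; omega
  · rw [h2, List.length_append]; omega
  · have e1 : u.toWord.drop P.length = W := by rw [h1, List.drop_left]
    have e2 : (v * u⁻¹).toWord.length - P.length = S.length := by omega
    rw [e1, e2, h2, List.drop_left]

end WordAux

section Count
variable {r q : ℕ}

def eIdx (p : Fin r × Bool) : ℕ := 2 * p.1.val + (if p.2 then 1 else 0)

lemma eIdx_lt (p : Fin r × Bool) : eIdx p < 2 * r := by
  rcases p with ⟨⟨a, ha⟩, b⟩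
  cases b <;> simp [eIdx] <;> omega

lemma eIdx_inj {p p' : Fin r × Bool} (h : eIdx p = eIdx p') : p = p' := by
  rcases p with ⟨⟨a, ha⟩, b⟩; rcases p' with ⟨⟨a', ha'⟩, b'⟩
  cases b <;> cases b' <;> simp [eIdx] at h ⊢ <;> omega

def codeN (a b : Fin r × Bool) : ℕ :=
  if eIdx b < eIdx (a.1, !a.2) then eIdx b else eIdx b - 1

lemma RR_ne {a b : Fin r × Bool} (h : RR a b) : b ≠ (a.1, !a.2) := by
  intro hc; exact h (by rw [hc]; exact ⟨rfl, rfl⟩)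

lemma codeN_lt (hr : 2 ≤ r) (hq : q = 2 * r - 1) {a b : Fin r × Bool} (h : RR a b) :
    codeN a b < q := by
  have h1 := eIdx_lt b
  have h2 := eIdx_lt (a.1, !a.2)
  have h3 : eIdx b ≠ eIdx (a.1, !a.2) := fun hc => RR_ne h (eIdx_inj hc)
  unfold codeN
  split <;> omega

lemma codeN_inj (hr : 2 ≤ r) {a b b' : Fin r × Bool} (h : RR a b) (h' : RR a b')
    (heq : codeN a b = codeN a b') : b = b' := by
  have h1 := eIdx_lt b
  have h1' := eIdx_lt b'
  have h3 : eIdx b ≠ eIdx (a.1, !a.2) := fun hc => RR_ne h (eIdx_inj hc)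
  have h3' : eIdx b' ≠ eIdx (a.1, !a.2) := fun hc => RR_ne h' (eIdx_inj hc)
  apply eIdx_inj
  unfold codeN at heq
  split at heq <;> split at heq <;> omega

lemma getD_eq_getElem' {α : Type*} (L : List α) (d : α) {j : ℕ} (h : j < L.length) :
    L.getD j d = L[j] := by
  simp [List.getD_eq_getElem?_getD, List.getElem?_eq_getElem h]

lemma chain'_getD {α : Type*} {L : List (α × Bool)} (h : List.Chain' RR L) (d : α × Bool)
    {j : ℕ} (hj : j + 1 < L.length) :
    RR (L.getD j d) (L.getD (j+1) d) := by
  rw [getD_eq_getElem' L d (by omega), getD_eq_getElem' L d hj]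
  have := List.isChain_iff_getElem.mp h j (by omega)
  simpa [List.get_eq_getElem] using this

lemma enc_list_inj (hr : 2 ≤ r) {i : ℕ} (hi : 1 ≤ i) (d : Fin r × Bool)
    {L L' : List (Fin r × Bool)}
    (hL : List.Chain' RR L) (hL' : List.Chain' RR L')
    (hlen : L.length = i) (hlen' : L'.length = i)
    (h0 : L.getD 0 d = L'.getD 0 d)
    (hc : ∀ j, j + 1 < i → codeN (L.getD j d) (L.getD (j+1) d)
        = codeN (L'.getD j d) (L'.getD (j+1) d)) :
    L = L' := by
  have key : ∀ j, j < i → L.getD j d = L'.getD j d := by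
    intro j
    induction j with
    | zero => intro _; exact h0
    | succ j ihj =>
      intro hj
      have e1 := ihj (by omega)
      have a1 : RR (L.getD j d) (L.getD (j+1) d) := chain'_getD hL d (by omega)
      have a2 : RR (L'.getD j d) (L'.getD (j+1) d) := chain'_getD hL' d (by omega)
      rw [e1] at a1
      have hcj := hc j hj
      rw [e1] at hcj
      exact codeN_inj hr a1 a2 hcj
  apply List.ext_getElem (by omega)
  intro j hj hj'
  have := key j (by omega)
  rwa [getD_eq_getElem' L d hj, getD_eq_getElem' L' d hj'] at this

lemma fiber_card (hr : 2 ≤ r) (hq : q = 2 * r - 1) (i : ℕ) (W : List (Fin r × Bool))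
    (S : Finset (FreeGroup (Fin r))) :
    (S.filter (fun g => i ≤ g.toWord.length ∧ g.toWord.drop i = W)).card ≤ 2 * q ^ i := by
  have hq3 : 3 ≤ q := by omega
  rcases Nat.eq_zero_or_pos i with rfl | hi
  · -- i = 0 : at most one element
    have : (S.filter (fun g => 0 ≤ g.toWord.length ∧ g.toWord.drop 0 = W)).card ≤ 1 := by
      apply Finset.card_le_one.mpr
      intro g hg g' hg'
      simp only [Finset.mem_filter, List.drop_zero] at hg hg'
      apply FreeGroup.toWord_injective
      rw [hg.2.2, hg'.2.2]
    simpa using this.trans (by omega)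
  · -- i ≥ 1
    have hrpos : 0 < r := by omega
    set d : Fin r × Bool := (⟨0, hrpos⟩, true) with hd
    set T := (Fin r × Bool) × (Fin (i-1) → Fin q) with hT
    have : Fintype.card T = 2 * r * q ^ (i-1) := by
      show Fintype.card ((Fin r × Bool) × (Fin (i-1) → Fin q)) = _
      rw [Fintype.card_prod, Fintype.card_prod, Fintype.card_fun]
      simp only [Fintype.card_fin, Fintype.card_bool]
      ring
    apply le_trans (Finset.card_le_card_of_injOn
      (fun g => (((g.toWord.take i).getD 0 d),
        (fun j : Fin (i-1) => (⟨min (codeN ((g.toWord.take i).getD j.val d)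
            ((g.toWord.take i).getD (j.val+1) d)) (q-1), by omega⟩ : Fin q))))
      (fun g _ => Finset.mem_univ _) ?_)
      ?_
    · -- injectivity
      intro g hg g' hg' heq
      simp only [Finset.coe_filter, Set.mem_setOf_eq, Finset.mem_coe] at hg hg'
      obtain ⟨-, hgi, hgW⟩ := hg
      obtain ⟨-, hgi', hgW'⟩ := hg'
      set Lg := g.toWord.take i with hLg
      set Lg' := g'.toWord.take i with hLg'
      have hlen : Lg.length = i := by simp [hLg]; omega
      have hlen' : Lg'.length = i := by simp [hLg']; omega
      have hch : List.Chain' RR Lg := (chain_toWord g).take i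
      have hch' : List.Chain' RR Lg' := (chain_toWord g').take i
      have h1 := congrArg Prod.fst heq
      have h2 := congrArg Prod.snd heq
      simp only at h1 h2
      have hLL : Lg = Lg' := by
        apply enc_list_inj hr hi d hch hch' hlen hlen' h1
        intro j hj
        have hjlt : j < i - 1 := by omega
        have := congrFun h2 ⟨j, hjlt⟩
        simp only [← hLg, ← hLg'] at this
        have c1 : codeN (Lg.getD j d) (Lg.getD (j+1) d) < q :=
          codeN_lt hr hq (chain'_getD hch d (by omega))
        have c2 : codeN (Lg'.getD j d) (Lg'.getD (j+1) d) < q :=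
          codeN_lt hr hq (chain'_getD hch' d (by omega))
        simp only [Fin.mk.injEq] at this
        omega
      apply FreeGroup.toWord_injective
      calc g.toWord = Lg ++ g.toWord.drop i := by rw [hLg, List.take_append_drop]
      _ = Lg' ++ g'.toWord.drop i := by rw [hLL, hgW, hgW']
      _ = g'.toWord := by rw [hLg', List.take_append_drop]
    · -- cardinality of target
      rw [Finset.card_univ, this]
      have : 2 * r ≤ 2 * q := by omega
      calc 2 * r * q ^ (i-1) ≤ 2 * q * q ^ (i-1) := Nat.mul_le_mul_right _ this
      _ = 2 * q ^ i := by
        rw [mul_assoc, ← pow_succ']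
        congr 2
        omega
end Count

section TsumPart
variable {α : Type*} [DecidableEq α]

lemma conv_eval (n : ℕ) (E : Finset (FreeGroup α)) (x : FreeGroup α) :
    conv (sphInd n) (finInd E) x = ∑ u ∈ E, sphInd n (x * u⁻¹) := by
  unfold conv
  rw [tsum_eq_sum (s := E.image (fun u => x * u⁻¹)) ?_]
  · rw [Finset.sum_image (by intro u _ u' _ h; exact inv_injective (mul_left_cancel h))]
    apply Finset.sum_congr rfl
    intro u hu
    have : (x * u⁻¹)⁻¹ * x = u := by group
    rw [this]
    unfold finInd
    rw [if_pos hu, mul_one]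
  · intro y hy
    have : y⁻¹ * x ∉ E := by
      intro hc
      apply hy
      refine Finset.mem_image.mpr ⟨y⁻¹ * x, hc, ?_⟩
      group
    unfold finInd
    rw [if_neg this, mul_zero]

lemma lhs_eq_card (n : ℕ) (E F' : Finset (FreeGroup α)) :
    ∑' x : FreeGroup α, conv (sphInd n) (finInd E) x * finInd F' x
      = (((F' ×ˢ E).filter (fun p => wlen (p.1 * p.2⁻¹) = n)).card : ℝ≥0∞) := by
  have h1 : ∀ x, conv (sphInd n) (finInd E) x * finInd F' x
      = (∑ u ∈ E, sphInd n (x * u⁻¹)) * finInd F' x := by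
    intro x; rw [conv_eval]
  simp_rw [h1]
  rw [tsum_eq_sum (s := F') (by
    intro v hv
    unfold finInd
    rw [if_neg hv, mul_zero])]
  have h2 : ∀ v ∈ F', (∑ u ∈ E, sphInd n (v * u⁻¹)) * finInd F' v
      = ∑ u ∈ E, sphInd n (v * u⁻¹) := by
    intro v hv; unfold finInd; rw [if_pos hv, mul_one]
  rw [Finset.sum_congr rfl h2]
  rw [Finset.card_filter]
  push_cast
  rw [Finset.sum_product]
  apply Finset.sum_congr rfl
  intro v _
  apply Finset.sum_congr rfl
  intro u _
  unfold sphInd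
  split <;> simp
end TsumPart

section ProdCount
variable {X Y : Type*} [DecidableEq X] [DecidableEq Y]

lemma card_filter_prod_le_left (A : Finset X) (B : Finset Y) (Q : X → Y → Prop)
    [∀ x, DecidablePred (Q x)] (m : ℕ)
    (h : ∀ x ∈ A, (B.filter (fun y => Q x y)).card ≤ m) :
    ((A ×ˢ B).filter (fun p => Q p.1 p.2)).card ≤ A.card * m := by
  have hsub : ((A ×ˢ B).filter (fun p => Q p.1 p.2)) ⊆
      A.biUnion (fun x => (B.filter (fun y => Q x y)).image (Prod.mk x)) := by
    intro p hp
    rw [Finset.mem_filter, Finset.mem_product] at hp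
    rw [Finset.mem_biUnion]
    exact ⟨p.1, hp.1.1, Finset.mem_image.mpr ⟨p.2, Finset.mem_filter.mpr ⟨hp.1.2, hp.2⟩, rfl⟩⟩
  calc ((A ×ˢ B).filter (fun p => Q p.1 p.2)).card
      ≤ (A.biUnion (fun x => (B.filter (fun y => Q x y)).image (Prod.mk x))).card :=
        Finset.card_le_card hsub
    _ ≤ ∑ x ∈ A, ((B.filter (fun y => Q x y)).image (Prod.mk x)).card :=
        Finset.card_biUnion_le
    _ ≤ ∑ x ∈ A, m := by
        apply Finset.sum_le_sum
        intro x hx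
        exact le_trans (Finset.card_image_le) (h x hx)
    _ = A.card * m := by rw [Finset.sum_const, smul_eq_mul]

lemma card_filter_prod_le_right (A : Finset X) (B : Finset Y) (Q : X → Y → Prop)
    [∀ x, DecidablePred (Q x)] (m : ℕ)
    (h : ∀ y ∈ B, (A.filter (fun x => Q x y)).card ≤ m) :
    ((A ×ˢ B).filter (fun p => Q p.1 p.2)).card ≤ B.card * m := by
  have hsub : ((A ×ˢ B).filter (fun p => Q p.1 p.2)) ⊆
      B.biUnion (fun y => (A.filter (fun x => Q x y)).image (fun x => (x, y))) := by
    intro p hp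
    rw [Finset.mem_filter, Finset.mem_product] at hp
    rw [Finset.mem_biUnion]
    exact ⟨p.2, hp.1.2, Finset.mem_image.mpr ⟨p.1, Finset.mem_filter.mpr ⟨hp.1.1, hp.2⟩, rfl⟩⟩
  calc ((A ×ˢ B).filter (fun p => Q p.1 p.2)).card
      ≤ (B.biUnion (fun y => (A.filter (fun x => Q x y)).image (fun x => (x, y)))).card :=
        Finset.card_le_card hsub
    _ ≤ ∑ y ∈ B, ((A.filter (fun x => Q x y)).image (fun x => (x, y))).card :=
        Finset.card_biUnion_le
    _ ≤ ∑ y ∈ B, m := by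
        apply Finset.sum_le_sum
        intro y hy
        exact le_trans (Finset.card_image_le) (h y hy)
    _ = B.card * m := by rw [Finset.sum_const, smul_eq_mul]
end ProdCount


lemma main_count {r q : ℕ} (hr : 2 ≤ r) (hq : q = 2 * r - 1) (n : ℕ)
    (E F' : Finset (FreeGroup (Fin r))) :
    ((F' ×ˢ E).filter (fun p => (p.1 * p.2⁻¹).toWord.length = n)).card
      ≤ ∑ i ∈ Finset.range (n+1), min (F'.card * (2 * q^i)) (E.card * (2 * q^(n-i))) := by
  have hsub : ((F' ×ˢ E).filter (fun p => (p.1 * p.2⁻¹).toWord.length = n)) ⊆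
      (Finset.range (n+1)).biUnion (fun i => (F' ×ˢ E).filter
        (fun p => i ≤ p.2.toWord.length ∧ n - i ≤ p.1.toWord.length ∧
          p.2.toWord.drop i = p.1.toWord.drop (n - i))) := by
    intro p hp
    rw [Finset.mem_filter] at hp
    obtain ⟨hmem, hd⟩ := hp
    obtain ⟨i, hi1, hi2, hi3, hi4⟩ := exists_split p.2 p.1
    rw [hd] at hi3 hi4
    rw [Finset.mem_biUnion]
    exact ⟨i, Finset.mem_range.mpr (by omega),
      Finset.mem_filter.mpr ⟨hmem, hi2, hi3, hi4⟩⟩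
  calc ((F' ×ˢ E).filter (fun p => (p.1 * p.2⁻¹).toWord.length = n)).card
      ≤ _ := Finset.card_le_card hsub
    _ ≤ ∑ i ∈ Finset.range (n+1), ((F' ×ˢ E).filter
        (fun p => i ≤ p.2.toWord.length ∧ n - i ≤ p.1.toWord.length ∧
          p.2.toWord.drop i = p.1.toWord.drop (n - i))).card := Finset.card_biUnion_le
    _ ≤ _ := by
      apply Finset.sum_le_sum
      intro i _
      apply le_min
      · apply card_filter_prod_le_left F' E
          (fun v u => i ≤ u.toWord.length ∧ n - i ≤ v.toWord.length ∧
            u.toWord.drop i = v.toWord.drop (n - i))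
        intro v _
        calc (E.filter (fun u => i ≤ u.toWord.length ∧ n - i ≤ v.toWord.length ∧
            u.toWord.drop i = v.toWord.drop (n - i))).card
            ≤ (E.filter (fun u => i ≤ u.toWord.length ∧
              u.toWord.drop i = v.toWord.drop (n - i))).card := by
              apply Finset.card_le_card
              intro u hu
              rw [Finset.mem_filter] at hu ⊢
              exact ⟨hu.1, hu.2.1, hu.2.2.2⟩
          _ ≤ 2 * q ^ i := fiber_card hr hq i _ E
      · apply card_filter_prod_le_right F' E
          (fun v u => i ≤ u.toWord.length ∧ n - i ≤ v.toWord.length ∧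
            u.toWord.drop i = v.toWord.drop (n - i))
        intro u _
        calc (F'.filter (fun v => i ≤ u.toWord.length ∧ n - i ≤ v.toWord.length ∧
            u.toWord.drop i = v.toWord.drop (n - i))).card
            ≤ (F'.filter (fun v => n - i ≤ v.toWord.length ∧
              v.toWord.drop (n - i) = u.toWord.drop i)).card := by
              apply Finset.card_le_card
              intro v hv
              rw [Finset.mem_filter] at hv ⊢
              exact ⟨hv.1, hv.2.2.1, hv.2.2.2.symm⟩
          _ ≤ 2 * q ^ (n - i) := fiber_card hr hq (n - i) _ F'


lemma le_of_sq_le_sq' {z M : ℝ} (hz : 0 ≤ z) (hM : 0 ≤ M) (h : z ^ 2 ≤ M ^ 2) : z ≤ M := by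
  nlinarith

lemma geom_bound (q : ℕ) (hq3 : 3 ≤ q) (t : ℕ) :
    (∑ i ∈ Finset.range (t+1), ((q:ℝ))^i) ≤ (3/2) * (q:ℝ)^t := by
  have hq1 : ((q:ℝ)) ≠ 1 := by
    have : (3:ℝ) ≤ (q:ℝ) := by exact_mod_cast hq3
    linarith
  have hq1' : (1:ℝ) < (q:ℝ) := by
    have : (3:ℝ) ≤ (q:ℝ) := by exact_mod_cast hq3
    linarith
  rw [geom_sum_eq hq1]
  rw [div_le_iff₀ (by linarith)]
  have h1 : ((q:ℝ))^(t+1) = (q:ℝ) * (q:ℝ)^t := by ring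
  have h2 : (3:ℝ) ≤ (q:ℝ) := by exact_mod_cast hq3
  have h3 : (0:ℝ) ≤ (q:ℝ)^t := by positivity
  nlinarith

lemma sum_min_le (q : ℕ) (hq3 : 3 ≤ q) (n a b : ℕ) :
    (∑ i ∈ Finset.range (n+1),
        ((min (b * (2 * q^i)) (a * (2 * q^(n-i))) : ℕ) : ℝ))
      ≤ 6 * Real.sqrt ((a : ℝ) * b) * Real.sqrt ((q:ℝ)^n) := by
  classical
  set x : ℕ → ℝ := fun i => (b:ℝ) * (2 * (q:ℝ)^i) with hx
  set y : ℕ → ℝ := fun i => (a:ℝ) * (2 * (q:ℝ)^(n-i)) with hy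
  have hq1 : (1:ℝ) < (q:ℝ) := by exact_mod_cast (by omega : 1 < q)
  have hq0 : (0:ℝ) < (q:ℝ) := by linarith
  have hxnn : ∀ i, 0 ≤ x i := fun i => by rw [hx]; positivity
  have hynn : ∀ i, 0 ≤ y i := fun i => by rw [hy]; positivity
  set M : ℝ := 2 * Real.sqrt ((a : ℝ) * b) * Real.sqrt ((q:ℝ)^n) with hM
  have hMnn : 0 ≤ M := by rw [hM]; positivity
  have hxy : ∀ i, i ≤ n → x i * y i = M ^ 2 := by
    intro i hi
    have hqq : (q:ℝ)^i * (q:ℝ)^(n-i) = (q:ℝ)^n := by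
      rw [← pow_add]; congr 1; omega
    have h1 : Real.sqrt ((a : ℝ) * b) ^ 2 = (a:ℝ) * b := Real.sq_sqrt (by positivity)
    have h2 : Real.sqrt ((q:ℝ)^n) ^ 2 = (q:ℝ)^n := Real.sq_sqrt (by positivity)
    rw [hM]
    show (b:ℝ) * (2 * (q:ℝ)^i) * ((a:ℝ) * (2 * (q:ℝ)^(n-i))) = _
    have hsq : (2 * Real.sqrt ((a:ℝ) * b) * Real.sqrt ((q:ℝ)^n)) ^ 2
        = 4 * ((a:ℝ) * b) * (q:ℝ)^n := by
      rw [mul_pow, mul_pow, h1, h2]; ring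
    rw [hsq, ← hqq]
    ring
  have keyx : ∀ i, i ≤ n → x i ≤ y i → x i ≤ M := by
    intro i hi hle
    apply le_of_sq_le_sq' (hxnn i) hMnn
    have := hxy i hi
    nlinarith [hxnn i, hynn i]
  have keyy : ∀ i, i ≤ n → y i ≤ x i → y i ≤ M := by
    intro i hi hle
    apply le_of_sq_le_sq' (hynn i) hMnn
    have := hxy i hi
    nlinarith [hxnn i, hynn i]
  have hcast : ∀ i, ((min (b * (2 * q^i)) (a * (2 * q^(n-i))) : ℕ) : ℝ)
      = min (x i) (y i) := by
    intro i
    rw [Nat.cast_min, hx, hy]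
    push_cast
    rfl
  simp_rw [hcast]
  -- threshold
  have hex : ∃ t, n < t ∨ y t < x t := ⟨n+1, Or.inl (by omega)⟩
  set t := Nat.find hex with hts
  have htle : t ≤ n + 1 := Nat.find_le (Or.inl (by omega))
  have hmin : ∀ j, j < t → j ≤ n ∧ x j ≤ y j := by
    intro j hj
    have := Nat.find_min hex hj
    push_neg at this
    exact ⟨by omega, this.2⟩
  -- split the sum
  rw [Finset.range_eq_Ico, ← Finset.sum_Ico_consecutive _ (Nat.zero_le t) htle]
  have hS1 : (∑ i ∈ Finset.Ico 0 t, min (x i) (y i)) ≤ (3/2) * M := by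
    rcases Nat.eq_zero_or_pos t with ht0 | htpos
    · rw [ht0]
      simp
      positivity
    · have hbound : ∀ i ∈ Finset.Ico 0 t, min (x i) (y i) ≤ x i :=
        fun i _ => min_le_left _ _
      calc (∑ i ∈ Finset.Ico 0 t, min (x i) (y i)) ≤ ∑ i ∈ Finset.Ico 0 t, x i :=
          Finset.sum_le_sum hbound
        _ = (b:ℝ) * 2 * ∑ i ∈ Finset.range t, ((q:ℝ))^i := by
            rw [← Finset.range_eq_Ico, Finset.mul_sum]
            apply Finset.sum_congr rfl
            intro i _
            rw [hx]; ring
        _ ≤ (b:ℝ) * 2 * ((3/2) * (q:ℝ)^(t-1)) := by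
            apply mul_le_mul_of_nonneg_left ?_ (by positivity)
            have : t = (t-1) + 1 := by omega
            rw [this]
            exact geom_bound q hq3 (t-1)
        _ = (3/2) * x (t-1) := by rw [hx]; ring
        _ ≤ (3/2) * M := by
            have h1 := hmin (t-1) (by omega)
            have := keyx (t-1) h1.1 h1.2
            linarith
  have hS2 : (∑ i ∈ Finset.Ico t (n+1), min (x i) (y i)) ≤ (3/2) * M := by
    rcases Nat.lt_or_ge n t with htn | htn
    · have : Finset.Ico t (n+1) = ∅ := by
        apply Finset.Ico_eq_empty
        omega
      rw [this]
      simp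
      positivity
    · -- t ≤ n
      have hyt : y t < x t := by
        rcases Nat.find_spec hex with h | h
        · omega
        · exact h
      calc (∑ i ∈ Finset.Ico t (n+1), min (x i) (y i))
          ≤ ∑ i ∈ Finset.Ico t (n+1), y i :=
            Finset.sum_le_sum (fun i _ => min_le_right _ _)
        _ = (a:ℝ) * 2 * ∑ i ∈ Finset.Ico t (n+1), ((q:ℝ))^(n-i) := by
            rw [Finset.mul_sum]
            apply Finset.sum_congr rfl
            intro i _
            rw [hy]; ring
        _ ≤ (a:ℝ) * 2 * ((3/2) * (q:ℝ)^(n-t)) := by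
            apply mul_le_mul_of_nonneg_left ?_ (by positivity)
            have hre : (∑ i ∈ Finset.Ico t (n+1), ((q:ℝ))^(n-i))
                = ∑ j ∈ Finset.range (n+1-t), ((q:ℝ))^j := by
              apply Finset.sum_nbij' (fun i => n - i) (fun j => n - j)
              · intro i hi
                rw [Finset.mem_Ico] at hi
                rw [Finset.mem_range]
                omega
              · intro j hj
                rw [Finset.mem_range] at hj
                rw [Finset.mem_Ico]
                omega
              · intro i hi
                rw [Finset.mem_Ico] at hi
                omega
              · intro j hj
                rw [Finset.mem_range] at hj
                omega
              · intro i _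
                rfl
            rw [hre]
            have : n + 1 - t = (n - t) + 1 := by omega
            rw [this]
            exact geom_bound q hq3 (n-t)
        _ = (3/2) * y t := by rw [hy]; ring
        _ ≤ (3/2) * M := by
            have := keyy t htn (le_of_lt hyt)
            linarith
  have : 6 * Real.sqrt ((a : ℝ) * b) * Real.sqrt ((q:ℝ)^n) = 3 * M := by rw [hM]; ring
  rw [this]
  linarith


/-- There is a constant `C > 0` such that for every `n` and all finite subsets
`E, F'` of the free group, `⟨χ_n ∗ χ_E, χ_{F'}⟩ ≤ C q^{n/2} |E|^{1/2} |F'|^{1/2}`,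
i.e. `λ(χ_n)` is of restricted weak type `(2,2)` with norm at most `C q^{n/2}`. -/
theorem sphere_restricted_weak_type_two_two
    (r : ℕ) (hr : 2 ≤ r) (q : ℕ) (hq : q = 2 * r - 1) :
    ∃ C : ℝ, 0 < C ∧
      ∀ (n : ℕ) (E F' : Finset (FreeGroup (Fin r))),
        ∑' x : FreeGroup (Fin r), conv (sphInd n) (finInd E) x * finInd F' x
          ≤ ENNReal.ofReal C * (q : ℝ≥0∞) ^ ((n : ℝ) / 2) *
            (E.card : ℝ≥0∞) ^ ((1 : ℝ) / 2) * (F'.card : ℝ≥0∞) ^ ((1 : ℝ) / 2) := by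
  refine ⟨6, by norm_num, ?_⟩
  intro n E F'
  have hq3 : 3 ≤ q := by omega
  rw [lhs_eq_card]
  have h1 : ((F' ×ˢ E).filter (fun p => wlen (p.1 * p.2⁻¹) = n)).card
      ≤ ∑ i ∈ Finset.range (n+1),
          min (F'.card * (2 * q^i)) (E.card * (2 * q^(n-i))) := by
    simp only [wlen]
    exact main_count hr hq n E F'
  set P := ((F' ×ˢ E).filter (fun p => wlen (p.1 * p.2⁻¹) = n)).card with hP
  have h1' : (P : ℝ) ≤ ∑ i ∈ Finset.range (n+1),
      ((min (F'.card * (2 * q^i)) (E.card * (2 * q^(n-i))) : ℕ) : ℝ) := by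
    exact_mod_cast h1
  have h2 := sum_min_le q hq3 n E.card F'.card
  have hreal : (P : ℝ) ≤ 6 * Real.sqrt ((E.card : ℝ) * F'.card)
      * Real.sqrt ((q:ℝ)^n) := le_trans h1' h2
  have hq0 : (0:ℝ) < (q:ℝ) := by
    have : (3:ℝ) ≤ (q:ℝ) := by exact_mod_cast hq3
    linarith
  -- rewrite the RHS as an ofReal
  have hsplit : Real.sqrt ((E.card : ℝ) * F'.card)
      = Real.sqrt (E.card : ℝ) * Real.sqrt (F'.card : ℝ) :=
    Real.sqrt_mul (by positivity) _
  have hqpow : Real.sqrt ((q:ℝ)^n) = (q:ℝ) ^ ((n:ℝ)/2) := by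
    rw [Real.sqrt_eq_rpow, ← Real.rpow_natCast (q:ℝ) n, ← Real.rpow_mul (le_of_lt hq0)]
    congr 1
    ring
  have hE : ((E.card : ℝ≥0∞)) ^ ((1:ℝ)/2)
      = ENNReal.ofReal (Real.sqrt (E.card : ℝ)) := by
    rw [← ENNReal.ofReal_natCast E.card,
      ENNReal.ofReal_rpow_of_nonneg (by positivity) (by norm_num),
      Real.sqrt_eq_rpow]
  have hF : ((F'.card : ℝ≥0∞)) ^ ((1:ℝ)/2)
      = ENNReal.ofReal (Real.sqrt (F'.card : ℝ)) := by
    rw [← ENNReal.ofReal_natCast F'.card,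
      ENNReal.ofReal_rpow_of_nonneg (by positivity) (by norm_num),
      Real.sqrt_eq_rpow]
  have hQ : ((q : ℝ≥0∞)) ^ ((n:ℝ)/2) = ENNReal.ofReal ((q:ℝ) ^ ((n:ℝ)/2)) := by
    rw [← ENNReal.ofReal_natCast q,
      ENNReal.ofReal_rpow_of_nonneg (by positivity) (by positivity)]
  rw [hE, hF, hQ]
  rw [← ENNReal.ofReal_mul (by norm_num), ← ENNReal.ofReal_mul (by positivity),
    ← ENNReal.ofReal_mul (by positivity)]
  calc (P : ℝ≥0∞) = ENNReal.ofReal (P : ℝ) := by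
        rw [ENNReal.ofReal_natCast]
    _ ≤ ENNReal.ofReal (6 * (q:ℝ) ^ ((n:ℝ)/2) * Real.sqrt (E.card : ℝ)
          * Real.sqrt (F'.card : ℝ)) := by
        apply ENNReal.ofReal_le_ofReal
        calc (P : ℝ) ≤ 6 * Real.sqrt ((E.card : ℝ) * F'.card) * Real.sqrt ((q:ℝ)^n) :=
              hreal
          _ = 6 * (q:ℝ) ^ ((n:ℝ)/2) * Real.sqrt (E.card : ℝ)
              * Real.sqrt (F'.card : ℝ) := by
            rw [hsplit, hqpow]
            ring

end
end
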